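/- arXiv:1604.01578 — 6 statements merged into one kernel-verified Lean document; each statement's English description precedes it below -/
import Mathlib

section
/- Let d ≥ 1 and let N : ℝ^d → ℝ be a seminorm (nonnegative, positively homogeneous of degree 1, subadditive, and symmetric: N(-x) = N(x)) such that N(x) is an integer for every x ∈ ℤ^d. Then there exists a finite subset F ⊆ ℤ^d such that N(x) = max_{y ∈ F} ⟨x, y⟩ for all x ∈ ℝ^d (Thurston's theorem). -/
open RealInnerProductSpace Filter Topology

set_option maxHeartbeats 1000000 in
/-- **Thurston's theorem.** A seminorm on `ℝ^d` taking integer values on `ℤ^d`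
is the maximum of finitely many integer linear functionals. -/
theorem thurston_seminorm_integer_polyhedral
    (d : ℕ) (hd : 1 ≤ d) (N : EuclideanSpace ℝ (Fin d) → ℝ)
    (hnonneg : ∀ x, 0 ≤ N x)
    (hhom : ∀ (c : ℝ) (x : EuclideanSpace ℝ (Fin d)), N (c • x) = |c| * N x)
    (hadd : ∀ x y : EuclideanSpace ℝ (Fin d), N (x + y) ≤ N x + N y)
    (hsymm : ∀ x : EuclideanSpace ℝ (Fin d), N (-x) = N x)
    (hint : ∀ x : EuclideanSpace ℝ (Fin d),
      (∀ i, ∃ m : ℤ, x i = (m : ℝ)) → ∃ m : ℤ, N x = (m : ℝ)) :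
    ∃ (F : Finset (EuclideanSpace ℝ (Fin d))) (hF : F.Nonempty),
      (∀ y ∈ F, ∀ i, ∃ m : ℤ, y i = (m : ℝ)) ∧
      ∀ x : EuclideanSpace ℝ (Fin d), N x = F.sup' hF (fun y => ⟪x, y⟫) := by
  classical
  have hzero : N 0 = 0 := by
    have h := hhom 0 0
    simpa using h
  set e : Fin d → EuclideanSpace ℝ (Fin d) := fun i => EuclideanSpace.single i (1:ℝ) with he
  have hcoord : ∀ (y : EuclideanSpace ℝ (Fin d)) (i : Fin d), |y i| ≤ ‖y‖ := by
    intro y i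
    have h := abs_real_inner_le_norm (EuclideanSpace.single i (1:ℝ)) y
    rw [EuclideanSpace.inner_single_left] at h
    simpa [EuclideanSpace.norm_single] using h
  set C : ℝ := (∑ i, N (e i)) + 1 with hC
  have hCpos : 0 < C := by
    have : 0 ≤ ∑ i, N (e i) := Finset.sum_nonneg fun i _ => hnonneg _
    linarith
  -- N is bounded by C * ‖·‖
  have hbound : ∀ x : EuclideanSpace ℝ (Fin d), N x ≤ C * ‖x‖ := by
    intro x
    have hx : ∑ i, x i • e i = x := by
      simpa [he, EuclideanSpace.basisFun_apply] using
        (EuclideanSpace.basisFun (Fin d) ℝ).sum_repr x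
    calc N x = N (∑ i, x i • e i) := by rw [hx]
      _ ≤ ∑ i, N (x i • e i) := Finset.le_sum_of_subadditive N hzero.le hadd _ _
      _ = ∑ i, |x i| * N (e i) := by simp [hhom]
      _ ≤ ∑ i, ‖x‖ * N (e i) := by
          refine Finset.sum_le_sum fun i _ => ?_
          exact mul_le_mul_of_nonneg_right (hcoord x i) (hnonneg _)
      _ = (∑ i, N (e i)) * ‖x‖ := by rw [← Finset.mul_sum, mul_comm]
      _ ≤ C * ‖x‖ := by
          have : (0:ℝ) ≤ ‖x‖ := norm_nonneg x
          nlinarith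
  have hlip : LipschitzWith (Real.toNNReal C) N := by
    refine LipschitzWith.of_dist_le_mul fun x y => ?_
    have h1 : N x - N y ≤ N (x - y) := by
      have := hadd (x - y) y
      simpa using this
    have h2 : N y - N x ≤ N (x - y) := by
      have h := hadd (y - x) x
      have h3 : N (y - x) = N (x - y) := by
        rw [← hsymm (y - x)]; congr 1; abel
      rw [h3] at h
      simpa using h
    have habs : |N x - N y| ≤ N (x - y) := abs_le.mpr ⟨by linarith, h1⟩
    have : N (x - y) ≤ C * ‖x - y‖ := hbound _
    rw [Real.dist_eq, dist_eq_norm, Real.coe_toNNReal _ hCpos.le]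
    exact habs.trans this
  have hNcont : Continuous N := hlip.continuous
  -- the candidate finite set: integer points of the dual ball
  set S : Set (EuclideanSpace ℝ (Fin d)) :=
    {y | (∀ z, ⟪z, y⟫ ≤ N z) ∧ ∀ i, ∃ m : ℤ, y i = (m:ℝ)} with hS
  have hnormS : ∀ y ∈ S, ‖y‖ ≤ C := by
    intro y hy
    have h1 : ⟪y, y⟫ ≤ N y := hy.1 y
    rw [real_inner_self_eq_norm_sq] at h1
    have h2 : N y ≤ C * ‖y‖ := hbound y
    nlinarith [norm_nonneg y, sq_nonneg (‖y‖ - C)]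
  have hSfin : S.Finite := by
    set M : ℤ := ⌈C⌉ with hM
    have hsub : S ⊆ (fun (z : Fin d → ℤ) =>
        (WithLp.toLp 2 (fun j => (z j : ℝ)) : EuclideanSpace ℝ (Fin d))) ''
        (Set.Icc (fun _ => -M) (fun _ => M)) := by
      intro y hy
      refine ⟨fun i => (hy.2 i).choose, ?_, ?_⟩
      · constructor <;> intro i
        · have hspec := (hy.2 i).choose_spec
          have h1 : |y i| ≤ C := (hcoord y i).trans (hnormS y hy)
          have h2 : (C:ℝ) ≤ (M:ℝ) := Int.le_ceil C
          have h4 : -(M:ℝ) ≤ ((hy.2 i).choose : ℝ) := by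
            rw [← hspec]
            obtain ⟨ha, hb⟩ := abs_le.mp h1
            linarith
          exact_mod_cast h4
        · have hspec := (hy.2 i).choose_spec
          have h1 : |y i| ≤ C := (hcoord y i).trans (hnormS y hy)
          have h2 : (C:ℝ) ≤ (M:ℝ) := Int.le_ceil C
          have h4 : ((hy.2 i).choose : ℝ) ≤ (M:ℝ) := by
            rw [← hspec]
            obtain ⟨ha, hb⟩ := abs_le.mp h1
            linarith
          exact_mod_cast h4
      · ext j
        exact ((hy.2 j).choose_spec).symm
    exact Set.Finite.subset ((Set.finite_Icc _ _).image _) hsub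
  have h0S : (0 : EuclideanSpace ℝ (Fin d)) ∈ S := by
    constructor
    · intro z; simpa using hnonneg z
    · intro i; exact ⟨0, by norm_num⟩
  set F : Finset (EuclideanSpace ℝ (Fin d)) := hSfin.toFinset with hF
  have hFne : F.Nonempty := ⟨0, by simp only [hF, hSfin.mem_toFinset]; exact h0S⟩
  refine ⟨F, hFne, ?_, ?_⟩
  · intro y hy i
    exact ((hSfin.mem_toFinset.mp hy).2 i)
  -- the sup is always at most N x
  have hle : ∀ x : EuclideanSpace ℝ (Fin d), F.sup' hFne (fun y => ⟪x, y⟫) ≤ N x := by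
    intro x
    refine Finset.sup'_le _ _ fun y hy => ?_
    exact ((hSfin.mem_toFinset.mp hy).1 x)
  -- key: at differentiability points, N x ≤ sup
  have hkey : ∀ x : EuclideanSpace ℝ (Fin d), DifferentiableAt ℝ N x →
      N x ≤ F.sup' hFne (fun y => ⟪x, y⟫) := by
    intro x hdx
    obtain ⟨ℓ, hfd⟩ : ∃ ℓ : EuclideanSpace ℝ (Fin d) →L[ℝ] ℝ, HasFDerivAt N ℓ x :=
      ⟨fderiv ℝ N x, hdx.hasFDerivAt⟩
    -- subgradient inequality
    have subgrad : ∀ z : EuclideanSpace ℝ (Fin d), ℓ z ≤ N (x + z) - N x := by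
      intro z
      have h1 : HasDerivAt (fun t : ℝ => x + t • z) z 0 := by
        simpa using ((hasDerivAt_id (0:ℝ)).smul_const z).const_add x
      have hline : HasDerivAt (fun t : ℝ => N (x + t • z)) (ℓ z) 0 := by
        have h2 : HasFDerivAt N ℓ (x + (0:ℝ) • z) := by simpa using hfd
        exact h2.comp_hasDerivAt (0:ℝ) h1
      have hslope := hline.tendsto_slope_zero_right
      refine le_of_tendsto hslope ?_
      filter_upwards [Ioc_mem_nhdsGT_of_mem (by simp : (0:ℝ) ∈ Set.Ico (0:ℝ) 1)] with t ht
      have ht0 : 0 < t := ht.1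
      have ht1 : t ≤ 1 := ht.2
      have hconv : N (x + t • z) ≤ (1 - t) * N x + t * N (x + z) := by
        have hxe : x + t • z = (1 - t) • x + t • (x + z) := by module
        calc N (x + t • z) = N ((1 - t) • x + t • (x + z)) := by rw [hxe]
          _ ≤ N ((1 - t) • x) + N (t • (x + z)) := hadd _ _
          _ = (1 - t) * N x + t * N (x + z) := by
              rw [hhom, hhom, abs_of_nonneg (by linarith), abs_of_nonneg ht0.le]
      simp only [zero_add, zero_smul, add_zero, smul_eq_mul]
      rw [inv_mul_le_iff₀ ht0]
      nlinarith
    -- the linear functional agrees with N at x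
    have hLx : ℓ x = N x := by
      have h1 : ℓ x ≤ N (x + x) - N x := subgrad x
      have h2 : ℓ (-x) ≤ N (x + -x) - N x := subgrad (-x)
      have h3 : N (x + x) = 2 * N x := by
        have hx2 : x + x = (2:ℝ) • x := by module
        rw [hx2, hhom]; norm_num
      have h4 : N (x + -x) = 0 := by simp [hzero]
      rw [map_neg] at h2
      rw [h3] at h1
      rw [h4] at h2
      linarith
    -- the Riesz representative
    set g : EuclideanSpace ℝ (Fin d) :=
      (InnerProductSpace.toDual ℝ (EuclideanSpace ℝ (Fin d))).symm ℓ with hg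
    have hginner : ∀ z : EuclideanSpace ℝ (Fin d), ⟪z, g⟫ = ℓ z := by
      intro z
      rw [real_inner_comm]
      exact InnerProductSpace.toDual_symm_apply
    -- g is in the dual ball
    have hgball : ∀ z : EuclideanSpace ℝ (Fin d), ⟪z, g⟫ ≤ N z := by
      intro z
      rw [hginner]
      have h1 := subgrad z
      have h2 := hadd x z
      linarith
    -- integrality of the coordinates of g
    have hgint : ∀ i : Fin d, ∃ m : ℤ, g i = (m:ℝ) := by
      intro i
      -- reduce to ℓ (e i) being an integer
      have hgi : g i = ℓ (e i) := by
        have h := hginner (e i)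
        rw [← h, he]
        simp [EuclideanSpace.inner_single_left]
      rw [hgi]
      -- the limiting argument
      set B : ℝ := Real.sqrt d + 2 with hB
      have hBpos : 0 < B := by
        have := Real.sqrt_nonneg (d:ℝ)
        rw [hB]; linarith
      have claim : ∀ v : ℕ → EuclideanSpace ℝ (Fin d), (∀ n, ‖v n‖ ≤ B) →
          Tendsto (fun n : ℕ => N ((n:ℝ) • x + v n) - (n:ℝ) * N x - ℓ (v n)) atTop (𝓝 0) := by
        intro v hv
        rw [NormedAddCommGroup.tendsto_nhds_zero]
        intro ε hε
        set c : ℝ := ε / (2 * (B + 1)) with hc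
        have hcpos : 0 < c := by rw [hc]; positivity
        have hlittle := hasFDerivAt_iff_isLittleO_nhds_zero.mp hfd
        have hev := hlittle.def hcpos
        have hto : Tendsto (fun n : ℕ => (n:ℝ)⁻¹ • v n) atTop (𝓝 0) := by
          refine squeeze_zero_norm (a := fun n : ℕ => B * (n:ℝ)⁻¹) (fun n => ?_) ?_
          · rw [norm_smul, norm_inv, Real.norm_natCast, mul_comm]
            exact mul_le_mul_of_nonneg_right (hv n) (by positivity)
          · simpa using tendsto_inv_atTop_nhds_zero_nat.const_mul B
        have hev2 := hto.eventually hev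
        filter_upwards [hev2, eventually_ge_atTop 1] with n hn hn1
        have hnpos : (0:ℝ) < (n:ℝ) := by exact_mod_cast hn1
        have hnne : ((n:ℝ)) ≠ 0 := hnpos.ne'
        have hsm : (n:ℝ) • ((n:ℝ)⁻¹ • v n) = v n := by
          rw [smul_smul, mul_inv_cancel₀ hnne, one_smul]
        have h1 : N ((n:ℝ) • x + v n) = (n:ℝ) * N (x + (n:ℝ)⁻¹ • v n) := by
          have hrw : (n:ℝ) • (x + (n:ℝ)⁻¹ • v n) = (n:ℝ) • x + v n := by
            rw [smul_add, hsm]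
          rw [← hrw, hhom, abs_of_pos hnpos]
        have h2 : ℓ (v n) = (n:ℝ) * ℓ ((n:ℝ)⁻¹ • v n) := by
          rw [← hsm, map_smul, smul_eq_mul, hsm]
        have heqn : N ((n:ℝ) • x + v n) - (n:ℝ) * N x - ℓ (v n)
            = (n:ℝ) * (N (x + (n:ℝ)⁻¹ • v n) - N x - ℓ ((n:ℝ)⁻¹ • v n)) := by
          rw [h1, h2]; ring
        rw [heqn, norm_mul, Real.norm_natCast]
        have hnlE : ‖(n:ℝ)⁻¹ • v n‖ ≤ B * (n:ℝ)⁻¹ := by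
          rw [norm_smul, norm_inv, Real.norm_natCast, mul_comm]
          exact mul_le_mul_of_nonneg_right (hv n) (by positivity)
        calc (n:ℝ) * ‖N (x + (n:ℝ)⁻¹ • v n) - N x - ℓ ((n:ℝ)⁻¹ • v n)‖
            ≤ (n:ℝ) * (c * ‖(n:ℝ)⁻¹ • v n‖) := by
              refine mul_le_mul_of_nonneg_left ?_ hnpos.le
              simpa using hn
          _ ≤ (n:ℝ) * (c * (B * (n:ℝ)⁻¹)) := by
              refine mul_le_mul_of_nonneg_left (mul_le_mul_of_nonneg_left hnlE hcpos.le) hnpos.le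
          _ = c * B * ((n:ℝ) * (n:ℝ)⁻¹) := by ring
          _ = c * B := by rw [mul_inv_cancel₀ hnne, mul_one]
          _ < ε := by
              rw [hc, div_mul_eq_mul_div, div_lt_iff₀ (by positivity)]
              nlinarith
      -- lattice approximation of n • x
      set p : ℕ → EuclideanSpace ℝ (Fin d) :=
        fun n => (WithLp.toLp 2 (fun j => (⌊(n:ℝ) * x j⌋ : ℝ)) : EuclideanSpace ℝ (Fin d)) with hp
      set q : ℕ → EuclideanSpace ℝ (Fin d) := fun n => p n - (n:ℝ) • x with hq
      have hqB : ∀ n, ‖q n‖ ≤ Real.sqrt d := by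
        intro n
        rw [hq]
        simp only
        rw [EuclideanSpace.norm_eq]
        apply Real.sqrt_le_sqrt
        have hterm : ∀ j, ‖(p n - (n:ℝ) • x) j‖ ^ 2 ≤ 1 := by
          intro j
          have hqj : (p n - (n:ℝ) • x) j = (⌊(n:ℝ) * x j⌋ : ℝ) - (n:ℝ) * x j := by
            simp [hp, PiLp.sub_apply, PiLp.smul_apply, smul_eq_mul]
          rw [hqj]
          have h1 := Int.floor_le ((n:ℝ) * x j)
          have h2 := Int.lt_floor_add_one ((n:ℝ) * x j)
          rw [Real.norm_eq_abs]
          have habs : |(⌊(n:ℝ) * x j⌋ : ℝ) - (n:ℝ) * x j| ≤ 1 := by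
            rw [abs_le]; constructor <;> linarith
          have hsq := pow_le_pow_left₀ (abs_nonneg ((⌊(n:ℝ) * x j⌋ : ℝ) - (n:ℝ) * x j)) habs 2
          simpa using hsq
        calc ∑ j, ‖(p n - (n:ℝ) • x) j‖ ^ 2 ≤ ∑ _j : Fin d, (1:ℝ) :=
              Finset.sum_le_sum fun j _ => hterm j
          _ = d := by simp
      have hq0 : ∀ n, ‖q n‖ ≤ B := by
        intro n
        refine (hqB n).trans ?_
        rw [hB]; linarith
      have hq1 : ∀ n, ‖q n + e i‖ ≤ B := by
        intro n
        calc ‖q n + e i‖ ≤ ‖q n‖ + ‖e i‖ := norm_add_le _ _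
          _ ≤ Real.sqrt d + 1 := by
              refine add_le_add (hqB n) ?_
              rw [he]
              simp [EuclideanSpace.norm_single]
          _ ≤ B := by rw [hB]; linarith
      have t1 := claim q hq0
      have t2 := claim (fun n => q n + e i) hq1
      have t3 := t2.sub t1
      rw [sub_zero] at t3
      have heq : (fun n : ℕ => (N ((n:ℝ) • x + (q n + e i)) - (n:ℝ) * N x - ℓ (q n + e i)) -
          (N ((n:ℝ) • x + q n) - (n:ℝ) * N x - ℓ (q n)))
          = fun n : ℕ => (N (p n + e i) - N (p n)) - ℓ (e i) := by
        funext n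
        have hqn : (n:ℝ) • x + q n = p n := by rw [hq]; simp
        have hqn2 : (n:ℝ) • x + (q n + e i) = p n + e i := by rw [← add_assoc, hqn]
        rw [hqn, hqn2, map_add]; ring
      rw [heq] at t3
      have ta : Tendsto (fun n : ℕ => N (p n + e i) - N (p n)) atTop (𝓝 (ℓ (e i))) := by
        have h := t3.add_const (ℓ (e i))
        simpa using h
      have hmem : ∀ n : ℕ, (N (p n + e i) - N (p n)) ∈ Set.range ((↑) : ℤ → ℝ) := by
        intro n
        obtain ⟨m1, hm1⟩ := hint (p n) (fun j => ⟨⌊(n:ℝ) * x j⌋, rfl⟩)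
        have hco : ∀ j, ∃ m : ℤ, (p n + e i) j = (m : ℝ) := by
          intro j
          by_cases hji : j = i
          · refine ⟨⌊(n:ℝ) * x j⌋ + 1, ?_⟩
            simp [hp, he, PiLp.add_apply, EuclideanSpace.single_apply, hji]
          · refine ⟨⌊(n:ℝ) * x j⌋, ?_⟩
            simp [hp, he, PiLp.add_apply, EuclideanSpace.single_apply, hji]
        obtain ⟨m2, hm2⟩ := hint (p n + e i) hco
        exact ⟨m2 - m1, by rw [hm1, hm2]; push_cast; ring⟩
      obtain ⟨m, hm⟩ := Int.isClosedEmbedding_coe_real.isClosed_range.mem_of_tendsto ta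
        (Filter.Eventually.of_forall hmem)
      exact ⟨m, hm.symm⟩
    -- conclude
    have hgS : g ∈ S := ⟨hgball, hgint⟩
    have hgF : g ∈ F := hSfin.mem_toFinset.mpr hgS
    have hsup : ⟪x, g⟫ ≤ F.sup' hFne (fun y => ⟪x, y⟫) :=
      Finset.le_sup' (fun y => ⟪x, y⟫) hgF
    rw [hginner x, hLx] at hsup
    exact hsup
  -- density and continuity
  have hdense : Dense {y : EuclideanSpace ℝ (Fin d) | DifferentiableAt ℝ N y} :=
    MeasureTheory.Measure.dense_of_ae
      (hlip.ae_differentiableAt (μ := MeasureTheory.volume))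
  have hcont : Continuous fun y : EuclideanSpace ℝ (Fin d) =>
      F.sup' hFne (fun z => ⟪y, z⟫) := by
    apply Continuous.finset_sup'_apply hFne
    intro z _
    exact continuous_id.inner continuous_const
  have hclosed : IsClosed {y : EuclideanSpace ℝ (Fin d) |
      N y ≤ F.sup' hFne (fun z => ⟪y, z⟫)} := isClosed_le hNcont hcont
  have hall : ∀ y : EuclideanSpace ℝ (Fin d), N y ≤ F.sup' hFne (fun z => ⟪y, z⟫) := by
    intro y
    have hsubset : {y : EuclideanSpace ℝ (Fin d) | DifferentiableAt ℝ N y} ⊆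
        {y : EuclideanSpace ℝ (Fin d) | N y ≤ F.sup' hFne (fun z => ⟪y, z⟫)} :=
      fun z hz => hkey z hz
    have h1 := closure_minimal hsubset hclosed
    have h2 : y ∈ closure {y : EuclideanSpace ℝ (Fin d) | DifferentiableAt ℝ N y} := by
      rw [hdense.closure_eq]; trivial
    exact h1 h2
  intro x
  exact le_antisymm (hall x) (hle x)
end

section
/- Let d ≥ 1 and let N : ℝ^d → ℝ be a seminorm taking integer values on ℤ^d. Then the unit ball {x ∈ ℝ^d : N(x) ≤ 1} is a polyhedron defined by finitely many integer inequalities: there exists a finite subset F ⊆ ℤ^d such that {x ∈ ℝ^d : N(x) ≤ 1} = {x ∈ ℝ^d : ⟨x, y⟩ ≤ 1 for all y ∈ F}. -/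
namespace IntPoly

variable {d : ℕ}

def IsInt (x : Fin d → ℝ) : Prop := ∀ i, ∃ k : ℤ, x i = k

lemma IsInt.add {x y : Fin d → ℝ} (hx : IsInt x) (hy : IsInt y) : IsInt (x + y) := by
  intro i; obtain ⟨a, ha⟩ := hx i; obtain ⟨b, hb⟩ := hy i
  exact ⟨a + b, by simp [ha, hb]⟩

lemma IsInt.neg {x : Fin d → ℝ} (hx : IsInt x) : IsInt (-x) := by
  intro i; obtain ⟨a, ha⟩ := hx i; exact ⟨-a, by simp [ha]⟩

lemma IsInt.zsmul {x : Fin d → ℝ} (hx : IsInt x) (j : ℤ) : IsInt ((j : ℝ) • x) := by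
  intro i; obtain ⟨a, ha⟩ := hx i
  exact ⟨j * a, by push_cast; simp [ha]⟩

lemma isInt_single (i : Fin d) : IsInt (Pi.single i (1:ℝ)) := by
  intro j
  rcases eq_or_ne j i with h | h
  · subst h; exact ⟨1, by simp⟩
  · exact ⟨0, by simp [Pi.single_apply, h]⟩

structure Good (q : (Fin d → ℝ) → ℝ) : Prop where
  sub : ∀ x y, q (x + y) ≤ q x + q y
  hom : ∀ (c : ℝ), 0 ≤ c → ∀ x, q (c • x) = c * q x
  int : ∀ x, IsInt x → ∃ k : ℤ, q x = k

lemma Good.zero {q : (Fin d → ℝ) → ℝ} (hq : Good q) : q 0 = 0 := by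
  have := hq.hom 0 le_rfl 0; simpa using this

lemma Good.neg_le {q : (Fin d → ℝ) → ℝ} (hq : Good q) (x : Fin d → ℝ) : -q (-x) ≤ q x := by
  have h := hq.sub x (-x)
  rw [add_neg_cancel, hq.zero] at h
  linarith

/-- truncation of `q` along direction `e`. -/
noncomputable def trunc (q : (Fin d → ℝ) → ℝ) (e : Fin d → ℝ) : (Fin d → ℝ) → ℝ :=
  fun x => sInf (Set.range fun t : ℝ => q (x + t • e) - t * q e)

lemma trunc_elem_lb {q : (Fin d → ℝ) → ℝ} {e : Fin d → ℝ} (hq : Good q)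
    (x : Fin d → ℝ) (t : ℝ) : -q (-x) ≤ q (x + t • e) - t * q e := by
  rcases le_or_gt 0 t with ht | ht
  · have h1 : q (t • e) ≤ q (x + t • e) + q (-x) := by
      have h := hq.sub (x + t • e) (-x)
      have he : x + t • e + -x = t • e := by abel
      rwa [he] at h
    have h2 : q (t • e) = t * q e := hq.hom t ht e
    linarith
  · have h1 : q x ≤ q (x + t • e) + q ((-t) • e) := by
      have h := hq.sub (x + t • e) ((-t) • e)
      have he : x + t • e + (-t) • e = x := by rw [neg_smul]; abel
      rwa [he] at h
    have h2 : q ((-t) • e) = (-t) * q e := hq.hom (-t) (by linarith) e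
    have h3 := hq.neg_le x
    linarith

lemma trunc_bddBelow {q : (Fin d → ℝ) → ℝ} {e : Fin d → ℝ} (hq : Good q) (x : Fin d → ℝ) :
    BddBelow (Set.range fun t : ℝ => q (x + t • e) - t * q e) :=
  ⟨-q (-x), by rintro r ⟨t, rfl⟩; exact trunc_elem_lb hq x t⟩

lemma trunc_le_elem {q : (Fin d → ℝ) → ℝ} {e : Fin d → ℝ} (hq : Good q)
    (x : Fin d → ℝ) (t : ℝ) : trunc q e x ≤ q (x + t • e) - t * q e :=
  csInf_le (trunc_bddBelow hq x) ⟨t, rfl⟩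

lemma trunc_le {q : (Fin d → ℝ) → ℝ} {e : Fin d → ℝ} (hq : Good q)
    (x : Fin d → ℝ) : trunc q e x ≤ q x := by
  have h := trunc_le_elem (e := e) hq x 0
  simpa using h

lemma trunc_lb {q : (Fin d → ℝ) → ℝ} {e : Fin d → ℝ} (hq : Good q)
    (x : Fin d → ℝ) : -q (-x) ≤ trunc q e x :=
  le_csInf (Set.range_nonempty _) (by rintro r ⟨t, rfl⟩; exact trunc_elem_lb hq x t)

lemma trunc_sub {q : (Fin d → ℝ) → ℝ} {e : Fin d → ℝ} (hq : Good q)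
    (x y : Fin d → ℝ) : trunc q e (x + y) ≤ trunc q e x + trunc q e y := by
  have key : ∀ t s : ℝ,
      trunc q e (x + y) ≤ (q (x + t • e) - t * q e) + (q (y + s • e) - s * q e) := by
    intro t s
    have h1 : trunc q e (x + y) ≤ q ((x + y) + (t + s) • e) - (t + s) * q e :=
      trunc_le_elem hq _ _
    have h2 : q ((x + y) + (t + s) • e) ≤ q (x + t • e) + q (y + s • e) := by
      have h := hq.sub (x + t • e) (y + s • e)
      have he : x + t • e + (y + s • e) = (x + y) + (t + s) • e := by
        rw [add_smul]; abel
      rwa [he] at h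
    nlinarith [h1, h2]
  have step1 : ∀ t : ℝ, trunc q e (x + y) - (q (x + t • e) - t * q e) ≤ trunc q e y := by
    intro t
    apply le_csInf (Set.range_nonempty _)
    rintro r ⟨s, rfl⟩
    show trunc q e (x + y) - (q (x + t • e) - t * q e) ≤ q (y + s • e) - s * q e
    have := key t s; linarith
  have step2 : trunc q e (x + y) - trunc q e y ≤ trunc q e x := by
    apply le_csInf (Set.range_nonempty _)
    rintro r ⟨t, rfl⟩
    show trunc q e (x + y) - trunc q e y ≤ q (x + t • e) - t * q e
    have := step1 t; linarith
  linarith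

lemma trunc_hom {q : (Fin d → ℝ) → ℝ} {e : Fin d → ℝ} (hq : Good q)
    (c : ℝ) (hc : 0 ≤ c) (x : Fin d → ℝ) : trunc q e (c • x) = c * trunc q e x := by
  rcases eq_or_lt_of_le hc with h | hpos
  · subst h
    simp only [zero_smul, zero_mul]
    -- trunc q e 0 = 0
    apply le_antisymm
    · have h := trunc_le_elem (e := e) hq 0 0
      simpa [hq.zero] using h
    · apply le_csInf (Set.range_nonempty _)
      rintro r ⟨t, rfl⟩
      show (0:ℝ) ≤ q (0 + t • e) - t * q e
      rcases le_or_gt 0 t with ht | ht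
      · have : q (0 + t • e) = t * q e := by
          rw [zero_add]; exact hq.hom t ht e
        linarith
      · have h1 : q (0 + t • e) = (-t) * q (-e) := by
          rw [zero_add]
          have : t • e = (-t) • (-e) := by rw [neg_smul, smul_neg, neg_neg]
          rw [this]; exact hq.hom (-t) (by linarith) (-e)
        have h2 := hq.neg_le e
        nlinarith
  · -- c > 0 case: first prove one-sided scaling for all a > 0, then combine
    have oneside : ∀ (a : ℝ), 0 < a → ∀ z : Fin d → ℝ, trunc q e (a • z) ≤ a * trunc q e z := by
      intro a ha z
      rw [← div_le_iff₀' ha]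
      apply le_csInf (Set.range_nonempty _)
      rintro r ⟨t, rfl⟩
      show trunc q e (a • z) / a ≤ q (z + t • e) - t * q e
      rw [div_le_iff₀' ha]
      have h1 : trunc q e (a • z) ≤ q (a • z + (a * t) • e) - (a * t) * q e :=
        trunc_le_elem hq _ _
      have h2 : q (a • z + (a * t) • e) = a * q (z + t • e) := by
        have he : a • z + (a * t) • e = a • (z + t • e) := by
          rw [smul_add, mul_smul]
        rw [he]; exact hq.hom a ha.le _
      rw [h2] at h1; nlinarith
    apply le_antisymm (oneside c hpos x)
    have h := oneside c⁻¹ (by positivity) (c • x)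
    rw [← mul_smul, inv_mul_cancel₀ hpos.ne', one_smul] at h
    calc c * trunc q e x ≤ c * (c⁻¹ * trunc q e (c • x)) := by
          apply mul_le_mul_of_nonneg_left h hc
      _ = trunc q e (c • x) := by field_simp


/-- helper: sInf of a range shifted by a constant -/
lemma sInf_range_add {f : ℝ → ℝ} (hb : BddBelow (Set.range f)) (a : ℝ) :
    sInf (Set.range fun t => f t + a) = sInf (Set.range f) + a := by
  obtain ⟨b, hbb⟩ := hb
  have hb2 : BddBelow (Set.range fun t => f t + a) := by
    refine ⟨b + a, ?_⟩
    rintro r ⟨t, rfl⟩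
    exact add_le_add (hbb ⟨t, rfl⟩) le_rfl
  apply le_antisymm
  · rw [← sub_le_iff_le_add]
    apply le_csInf (Set.range_nonempty _)
    rintro r ⟨t, rfl⟩
    rw [sub_le_iff_le_add]
    exact csInf_le hb2 ⟨t, rfl⟩
  · apply le_csInf (Set.range_nonempty _)
    rintro r ⟨t, rfl⟩
    have h := csInf_le ⟨b, hbb⟩ (Set.mem_range_self (f := f) t)
    show sInf (Set.range f) + a ≤ f t + a
    linarith

/-- trunc is linear along its own direction -/
lemma trunc_translate {q : (Fin d → ℝ) → ℝ} {e : Fin d → ℝ} (hq : Good q)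
    (x : Fin d → ℝ) (s : ℝ) : trunc q e (x + s • e) = trunc q e x + s * q e := by
  have hrange : (Set.range fun t : ℝ => q ((x + s • e) + t • e) - t * q e)
      = Set.range fun u : ℝ => (q (x + u • e) - u * q e) + s * q e := by
    ext r
    constructor
    · rintro ⟨t, rfl⟩
      refine ⟨s + t, ?_⟩
      dsimp only
      have he : x + (s + t) • e = (x + s • e) + t • e := by rw [add_smul]; abel
      rw [he]; ring
    · rintro ⟨u, rfl⟩
      refine ⟨u - s, ?_⟩
      dsimp only
      have he : (x + s • e) + (u - s) • e = x + u • e := by rw [sub_smul]; abel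
      rw [he]; ring
  show sInf _ = _
  rw [hrange, sInf_range_add (trunc_bddBelow hq x)]
  rfl

/-- trunc preserves linearity along other directions -/
lemma trunc_preserve {q : (Fin d → ℝ) → ℝ} {e w : Fin d → ℝ} (hq : Good q) {c : ℝ}
    (hlin : ∀ x t, q (x + t • w) = q x + t * c)
    (x : Fin d → ℝ) (t : ℝ) : trunc q e (x + t • w) = trunc q e x + t * c := by
  have hrange : (Set.range fun s : ℝ => q ((x + t • w) + s • e) - s * q e)
      = Set.range fun s : ℝ => (q (x + s • e) - s * q e) + t * c := by
    ext r
    constructor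
    · rintro ⟨s, rfl⟩
      refine ⟨s, ?_⟩
      dsimp only
      have he : (x + t • w) + s • e = (x + s • e) + t • w := by abel
      rw [he, hlin]; ring
    · rintro ⟨s, rfl⟩
      refine ⟨s, ?_⟩
      dsimp only
      have he : (x + t • w) + s • e = (x + s • e) + t • w := by abel
      rw [he, hlin]; ring
  show sInf _ = _
  rw [hrange, sInf_range_add (trunc_bddBelow hq x)]
  rfl

/-- trunc takes integer values on integer points, provided e is integer -/
lemma trunc_int {q : (Fin d → ℝ) → ℝ} {e : Fin d → ℝ} (hq : Good q) (he : IsInt e)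
    (x : Fin d → ℝ) (hx : IsInt x) : ∃ k : ℤ, trunc q e x = k := by
  obtain ⟨cz, hcz⟩ := hq.int e he
  -- the predicate: k is a value of the integer-sampled family
  set P : ℤ → Prop := fun k => ∃ j : ℤ, q (x + (j : ℝ) • e) - (j : ℝ) * q e = (k : ℝ) with hP
  have hval : ∀ j : ℤ, ∃ k : ℤ, q (x + (j : ℝ) • e) - (j : ℝ) * q e = (k : ℝ) := by
    intro j
    obtain ⟨a, ha⟩ := hq.int (x + (j : ℝ) • e) (hx.add (he.zsmul j))
    exact ⟨a - j * cz, by rw [ha, hcz]; push_cast; ring⟩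
  have Hinh : ∃ k, P k := by
    obtain ⟨k, hk⟩ := hval 0
    exact ⟨k, 0, hk⟩
  have Hbdd : ∃ b : ℤ, ∀ k, P k → b ≤ k := by
    refine ⟨⌈-q (-x)⌉, ?_⟩
    rintro k ⟨j, hj⟩
    have h1 := trunc_elem_lb (e := e) hq x (j : ℝ)
    rw [hj] at h1
    exact_mod_cast Int.ceil_le.mpr h1
  obtain ⟨lb, ⟨j₀, hj₀⟩, hlb⟩ := Int.exists_least_of_bdd Hbdd Hinh
  refine ⟨lb, le_antisymm ?_ ?_⟩
  · rw [← hj₀]; exact trunc_le_elem hq x _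
  · apply le_csInf (Set.range_nonempty _)
    rintro r ⟨t, rfl⟩
    show (lb : ℝ) ≤ q (x + t • e) - t * q e
    set j : ℤ := ⌈t⌉ with hj
    have hjt : t ≤ (j : ℝ) := Int.le_ceil t
    have hstep : q (x + (j : ℝ) • e) ≤ q (x + t • e) + ((j : ℝ) - t) * q e := by
      have h := hq.sub (x + t • e) (((j : ℝ) - t) • e)
      have he2 : (x + t • e) + ((j : ℝ) - t) • e = x + (j : ℝ) • e := by
        rw [sub_smul]; abel
      rw [he2] at h
      have h2 : q (((j : ℝ) - t) • e) = ((j : ℝ) - t) * q e :=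
        hq.hom _ (by linarith) e
      linarith
    obtain ⟨k, hk⟩ := hval j
    have hklb : (lb : ℝ) ≤ (k : ℝ) := by exact_mod_cast hlb k ⟨j, hk⟩
    rw [← hk] at hklb
    linarith

/-- trunc is Good when e is integer -/
lemma trunc_good {q : (Fin d → ℝ) → ℝ} {e : Fin d → ℝ} (hq : Good q) (he : IsInt e) :
    Good (trunc q e) :=
  ⟨trunc_sub hq, trunc_hom hq, trunc_int hq he⟩


noncomputable def sing (i : Fin d) : Fin d → ℝ := Pi.single i (1:ℝ)

/-- derived: from a translation rule and q 0 = 0, value on the direction -/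
lemma lin_self {q : (Fin d → ℝ) → ℝ} (hq : Good q) {w : Fin d → ℝ} {c : ℝ}
    (hlin : ∀ x t, q (x + t • w) = q x + t * c) : q w = c := by
  have h := hlin 0 1
  simpa [hq.zero] using h

lemma iterate_exists {q : (Fin d → ℝ) → ℝ} (hq : Good q) (k : ℕ) :
    ∃ q' : (Fin d → ℝ) → ℝ, Good q' ∧ (∀ x, q' x ≤ q x) ∧
      ∀ i : Fin d, (i : ℕ) < k → ∀ x t, q' (x + t • sing i) = q' x + t * q' (sing i) := by
  induction k with
  | zero => exact ⟨q, hq, fun x => le_rfl, fun i hi => absurd hi (Nat.not_lt_zero _)⟩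
  | succ k ih =>
    obtain ⟨q', hG, hle, hlin⟩ := ih
    by_cases hk : k < d
    · have hG'' : Good (trunc q' (sing ⟨k, hk⟩)) := trunc_good hG (isInt_single _)
      refine ⟨trunc q' (sing ⟨k, hk⟩), hG'',
        fun x => le_trans (trunc_le hG x) (hle x), ?_⟩
      intro i hi
      rcases Nat.lt_or_ge (i : ℕ) k with h | h
      · have hr : ∀ x t, trunc q' (sing ⟨k, hk⟩) (x + t • sing i)
            = trunc q' (sing ⟨k, hk⟩) x + t * q' (sing i) :=
          trunc_preserve hG (hlin i h)
        have hv := lin_self hG'' hr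
        intro x t
        rw [hr x t, hv]
      · have hik : i = ⟨k, hk⟩ := Fin.ext (by simp only [Fin.val_mk]; omega)
        have hr : ∀ x t, trunc q' (sing ⟨k, hk⟩) (x + t • sing ⟨k, hk⟩)
            = trunc q' (sing ⟨k, hk⟩) x + t * q' (sing ⟨k, hk⟩) :=
          fun x t => trunc_translate hG x t
        have hv := lin_self hG'' hr
        intro x t
        rw [hik, hr x t, hv]
    · refine ⟨q', hG, hle, fun i hi => hlin i ?_⟩
      have := i.isLt
      omega

lemma exists_int_functional {q : (Fin d → ℝ) → ℝ} (hq : Good q) :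
    ∃ γ : Fin d → ℝ, IsInt γ ∧ (∀ x, (∑ i, γ i * x i) ≤ q x) := by
  obtain ⟨q', hG, hle, hlin⟩ := iterate_exists hq d
  have hlin' : ∀ i : Fin d, ∀ x t, q' (x + t • sing i) = q' x + t * q' (sing i) :=
    fun i => hlin i i.isLt
  refine ⟨fun i => q' (sing i), fun i => hG.int _ (isInt_single i), ?_⟩
  intro x
  have hsum : ∀ s : Finset (Fin d),
      q' (∑ i ∈ s, x i • sing i) = ∑ i ∈ s, x i * q' (sing i) := by
    intro s
    induction s using Finset.induction_on with
    | empty => simpa using hG.zero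
    | insert a s' hni ih =>
      rw [Finset.sum_insert hni, Finset.sum_insert hni, ← ih]
      have h := hlin' a (∑ i ∈ s', x i • sing i) (x a)
      rw [add_comm (x a • sing a)]
      rw [h]; ring
  have hx : ∑ i, x i • sing i = x := by
    funext j
    rw [Finset.sum_apply]
    have h1 : ∀ i : Fin d, (x i • sing i) j = if j = i then x i else 0 := by
      intro i
      simp [sing, Pi.single_apply, mul_ite]
    simp only [h1]
    simp
  have hq'x := hsum Finset.univ
  rw [hx] at hq'x
  have hfinal : (∑ i, (fun i => q' (sing i)) i * x i) = q' x := by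
    rw [hq'x]
    apply Finset.sum_congr rfl
    intro i _
    dsimp only
    ring
  rw [hfinal]
  exact hle x

lemma exists_dual_at {N : (Fin d → ℝ) → ℝ} (hN : Good N) (m : Fin d → ℝ) (hm : IsInt m) :
    ∃ γ : Fin d → ℝ, IsInt γ ∧ (∀ x, (∑ i, γ i * x i) ≤ N x) ∧ (∑ i, γ i * m i) = N m := by
  have hG0 : Good (trunc N m) := trunc_good hN hm
  obtain ⟨γ, hγint, hγle⟩ := exists_int_functional hG0
  have htr : ∀ x t, trunc N m (x + t • m) = trunc N m x + t * N m :=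
    fun x t => trunc_translate hN x t
  have hm1 : trunc N m m = N m := lin_self hG0 htr
  have hneg : trunc N m (-m) = -(N m) := by
    have h2 := htr 0 (-1)
    rw [hG0.zero] at h2
    have harg : (0 : Fin d → ℝ) + (-1 : ℝ) • m = -m := by
      rw [neg_smul, one_smul]; abel
    rw [harg] at h2
    rw [h2]; ring
  refine ⟨γ, hγint, fun x => le_trans (hγle x) (trunc_le hN x), le_antisymm ?_ ?_⟩
  · rw [← hm1]; exact hγle m
  · have h3 := hγle (-m)
    rw [hneg] at h3
    have h4 : (∑ i, γ i * (-m) i) = -∑ i, γ i * m i := by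
      rw [← Finset.sum_neg_distrib]
      apply Finset.sum_congr rfl
      intro i _
      show γ i * (-(m i)) = -(γ i * m i)
      ring
    rw [h4] at h3
    linarith

lemma pi_decomp (z : Fin d → ℝ) : ∑ i, z i • sing i = z := by
  funext j
  rw [Finset.sum_apply]
  have h1 : ∀ i : Fin d, (z i • sing i) j = if j = i then z i else 0 := by
    intro i
    simp [sing, Pi.single_apply, mul_ite]
  simp only [h1]
  simp

lemma sum_mul_sing (f : Fin d → ℝ) (i : Fin d) : ∑ j, f j * sing i j = f i := by
  have h1 : ∀ j : Fin d, f j * sing i j = if j = i then f j else 0 := by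
    intro j
    simp [sing, Pi.single_apply, mul_ite]
  simp only [h1]
  simp

lemma good_sum_le {q : (Fin d → ℝ) → ℝ} (hq : Good q) {ι : Type*} [DecidableEq ι]
    (f : ι → Fin d → ℝ) (s : Finset ι) : q (∑ i ∈ s, f i) ≤ ∑ i ∈ s, q (f i) := by
  induction s using Finset.induction_on with
  | empty => simp [hq.zero]
  | insert a s' hni ih =>
    rw [Finset.sum_insert hni, Finset.sum_insert hni]
    exact le_trans (hq.sub _ _) (by linarith)

lemma good_abs {q : (Fin d → ℝ) → ℝ} (hq : Good q) (hsym : ∀ x, q (-x) = q x)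
    (c : ℝ) (v : Fin d → ℝ) : q (c • v) = |c| * q v := by
  rcases le_or_gt 0 c with hc | hc
  · rw [hq.hom c hc v, abs_of_nonneg hc]
  · have h1 : c • v = -((-c) • v) := by rw [neg_smul, neg_neg]
    rw [h1, hsym, hq.hom (-c) (by linarith) v, abs_of_neg hc]

lemma good_bound {q : (Fin d → ℝ) → ℝ} (hq : Good q) (hsym : ∀ x, q (-x) = q x)
    (z : Fin d → ℝ) : q z ≤ ∑ i, |z i| * q (sing i) := by
  calc q z = q (∑ i, z i • sing i) := by rw [pi_decomp]
    _ ≤ ∑ i, q (z i • sing i) := good_sum_le hq _ _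
    _ = ∑ i, |z i| * q (sing i) := by
        apply Finset.sum_congr rfl
        intro i _
        exact good_abs hq hsym (z i) (sing i)

lemma good_nonneg {q : (Fin d → ℝ) → ℝ} (hq : Good q) (hsym : ∀ x, q (-x) = q x)
    (x : Fin d → ℝ) : 0 ≤ q x := by
  have h := hq.sub x (-x)
  rw [add_neg_cancel, hq.zero, hsym] at h
  linarith

end IntPoly

open RealInnerProductSpace

/-- The unit ball of a seminorm on `ℝ^d` taking integer values on `ℤ^d` is a
polyhedron defined by finitely many integer inequalities. -/
theorem unit_ball_of_integer_seminorm_is_integer_polyhedron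
    (d : ℕ) (hd : 1 ≤ d) (N : EuclideanSpace ℝ (Fin d) → ℝ)
    (hhom : ∀ (c : ℝ) (x : EuclideanSpace ℝ (Fin d)), N (c • x) = |c| * N x)
    (hadd : ∀ x y : EuclideanSpace ℝ (Fin d), N (x + y) ≤ N x + N y)
    (hint : ∀ x : EuclideanSpace ℝ (Fin d),
      (∀ i, ∃ m : ℤ, x i = (m : ℝ)) → ∃ m : ℤ, N x = (m : ℝ)) :
    ∃ F : Finset (EuclideanSpace ℝ (Fin d)),
      (∀ y ∈ F, ∀ i, ∃ m : ℤ, y i = (m : ℝ)) ∧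
      {x : EuclideanSpace ℝ (Fin d) | N x ≤ 1} =
        {x : EuclideanSpace ℝ (Fin d) | ∀ y ∈ F, ⟪x, y⟫ ≤ 1} := by
  classical
  set Nf : (Fin d → ℝ) → ℝ := fun x => N (WithLp.toLp 2 x) with hNf
  have hinner : ∀ x y : EuclideanSpace ℝ (Fin d), ⟪x, y⟫ = ∑ i, x i * y i := by
    intro x y
    simp [PiLp.inner_apply, RCLike.inner_apply, conj_trivial]
    exact Finset.sum_congr rfl (fun i _ => mul_comm _ _)
  have hsym : ∀ x : Fin d → ℝ, Nf (-x) = Nf x := by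
    intro x
    have h := hhom (-1) (WithLp.toLp 2 x)
    exact (by simpa [neg_one_smul] using h : N (-WithLp.toLp 2 x) = N (WithLp.toLp 2 x))
  have hNG : IntPoly.Good Nf := by
    refine ⟨fun x y => hadd (WithLp.toLp 2 x) (WithLp.toLp 2 y), fun c hc x => ?_, fun x hx => hint (WithLp.toLp 2 x) hx⟩
    have h := hhom c (WithLp.toLp 2 x)
    rwa [abs_of_nonneg hc] at h
  set Hs : Set (Fin d → ℤ) := {γ | ∀ x : Fin d → ℝ, (∑ i, (γ i : ℝ) * x i) ≤ Nf x} with hHs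
  have hfin : Hs.Finite := by
    apply Set.Finite.subset
      (Set.Finite.pi (t := fun i : Fin d =>
        Set.Icc (⌈-(Nf (IntPoly.sing i))⌉) ⌊Nf (IntPoly.sing i)⌋)
        (fun i => Set.finite_Icc _ _))
    intro γ hγ
    rw [Set.mem_pi]
    intro i _
    constructor
    · have h := hγ (-(IntPoly.sing i))
      have hev : (∑ j, (γ j : ℝ) * (-(IntPoly.sing i)) j) = -(γ i : ℝ) := by
        have hterm : ∀ j, (γ j : ℝ) * (-(IntPoly.sing i)) j
            = -((γ j : ℝ) * IntPoly.sing i j) := by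
          intro j; show (γ j : ℝ) * (-(IntPoly.sing i j)) = _; ring
        rw [Finset.sum_congr rfl (fun j _ => hterm j), Finset.sum_neg_distrib,
          IntPoly.sum_mul_sing]
      rw [hev, hsym] at h
      rw [Int.ceil_le]
      push_cast
      linarith
    · have h := hγ (IntPoly.sing i)
      rw [IntPoly.sum_mul_sing] at h
      rw [Int.le_floor]
      exact h
  refine ⟨hfin.toFinset.image
    (fun γ : Fin d → ℤ => WithLp.toLp 2 (fun i => (γ i : ℝ))), ?_, ?_⟩
  · intro y hy
    rw [Finset.mem_image] at hy
    obtain ⟨γ, _, rfl⟩ := hy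
    exact fun i => ⟨γ i, rfl⟩
  · ext x
    simp only [Set.mem_setOf_eq]
    constructor
    · intro hx y hy
      rw [Finset.mem_image] at hy
      obtain ⟨γ, hγmem, rfl⟩ := hy
      rw [Set.Finite.mem_toFinset] at hγmem
      have h := hγmem x
      rw [hinner]
      have hcomm : (∑ i, x i * (WithLp.toLp 2 (fun i => (γ i : ℝ))) i)
          = ∑ i, (γ i : ℝ) * x i := by
        apply Finset.sum_congr rfl
        intro i _
        show x i * (γ i : ℝ) = _
        ring
      rw [hcomm]
      exact le_trans h hx
    · intro hx
      show Nf x ≤ 1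
      set K : ℝ := ∑ i, Nf (IntPoly.sing i) with hKdef
      have hK0 : 0 ≤ K :=
        Finset.sum_nonneg fun i _ => IntPoly.good_nonneg hNG hsym _
      apply le_of_forall_pos_le_add
      intro ε hε
      set s : ℕ := ⌈(2 * K + 1) / ε⌉₊ + 1 with hsdef
      have hs0 : (0 : ℝ) < s := by positivity
      have hslt : (2 * K + 1) / s < ε := by
        rw [div_lt_iff₀ hs0]
        have h1 : (2 * K + 1) / ε < s := by
          have h2 := Nat.le_ceil ((2 * K + 1) / ε)
          push_cast [hsdef]
          linarith
        rw [div_lt_iff₀ hε] at h1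
        linarith [mul_comm ε (s : ℝ)]
      set m : Fin d → ℝ := fun i => (⌊(s : ℝ) * x i⌋ : ℝ) with hmdef
      have hm : IntPoly.IsInt m := fun i => ⟨⌊(s : ℝ) * x i⌋, rfl⟩
      set u : Fin d → ℝ := (s : ℝ)⁻¹ • m with hudef
      have hui : ∀ i, u i = (s : ℝ)⁻¹ * m i := fun i => rfl
      have happrox : ∀ i, |x i - u i| ≤ 1 / s := by
        intro i
        have h1 : (m i) ≤ (s : ℝ) * x i := Int.floor_le _
        have h2 : (s : ℝ) * x i < m i + 1 := Int.lt_floor_add_one _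
        have h3 : x i - u i = ((s : ℝ) * x i - m i) / s := by
          rw [hui]
          field_simp
        rw [h3, abs_div, abs_of_nonneg (by nlinarith), abs_of_pos hs0]
        gcongr
        nlinarith
      obtain ⟨γ, hγint, hγle, hγm⟩ := IntPoly.exists_dual_at hNG m hm
      set γz : Fin d → ℤ := fun i => (hγint i).choose with hγzdef
      have hγz : ∀ i, γ i = ((γz i : ℤ) : ℝ) := fun i => (hγint i).choose_spec
      have hγmem : γz ∈ Hs := by
        intro z
        have h := hγle z
        have heq : (∑ i, ((γz i : ℤ) : ℝ) * z i) = ∑ i, γ i * z i :=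
          Finset.sum_congr rfl (fun i _ => by rw [hγz i])
        rw [heq]
        exact h
      have hxγ := hx (WithLp.toLp 2 (fun i => ((γz i : ℤ) : ℝ)))
        (by rw [Finset.mem_image]; exact ⟨γz, hfin.mem_toFinset.mpr hγmem, rfl⟩)
      rw [hinner] at hxγ
      have hxγ' : (∑ i, γ i * x i) ≤ 1 := by
        have heq : (∑ i, x i * (WithLp.toLp 2 (fun i => ((γz i : ℤ) : ℝ))) i)
            = ∑ i, γ i * x i := by
          apply Finset.sum_congr rfl
          intro i _
          show x i * ((γz i : ℤ) : ℝ) = γ i * x i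
          rw [hγz i]; ring
        rwa [heq] at hxγ
      have hbound : ∀ i, |γ i| ≤ Nf (IntPoly.sing i) := by
        intro i
        rw [abs_le]
        constructor
        · have h := hγle (-(IntPoly.sing i))
          have hev : (∑ j, γ j * (-(IntPoly.sing i)) j) = -(γ i) := by
            have hterm : ∀ j, γ j * (-(IntPoly.sing i)) j = -(γ j * IntPoly.sing i j) := by
              intro j; show γ j * (-(IntPoly.sing i j)) = _; ring
            rw [Finset.sum_congr rfl (fun j _ => hterm j), Finset.sum_neg_distrib,
              IntPoly.sum_mul_sing]
          rw [hev, hsym] at h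
          linarith
        · have h := hγle (IntPoly.sing i)
          rwa [IntPoly.sum_mul_sing] at h
      set w : Fin d → ℝ := fun i => x i - u i with hwdef
      have hchain1 : Nf x ≤ Nf u + Nf w := by
        have h := hNG.sub u w
        have he : u + w = x := by
          funext j
          show u j + (x j - u j) = x j
          ring
        rwa [he] at h
      have hu : Nf u = (s : ℝ)⁻¹ * Nf m := hNG.hom _ (by positivity) m
      have hsum_u : Nf u = ∑ i, γ i * u i := by
        rw [hu, ← hγm, Finset.mul_sum]
        apply Finset.sum_congr rfl
        intro i _
        rw [hui]
        ring
      have hsplit : (∑ i, γ i * u i) ≤ 1 + K / s := by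
        have h1 : (∑ i, γ i * u i) = (∑ i, γ i * x i) + ∑ i, γ i * (u i - x i) := by
          rw [← Finset.sum_add_distrib]
          apply Finset.sum_congr rfl
          intro i _
          ring
        have h2 : (∑ i, γ i * (u i - x i)) ≤ ∑ i, Nf (IntPoly.sing i) * (1 / s) := by
          apply Finset.sum_le_sum
          intro i _
          calc γ i * (u i - x i) ≤ |γ i * (u i - x i)| := le_abs_self _
            _ = |γ i| * |u i - x i| := abs_mul _ _
            _ ≤ Nf (IntPoly.sing i) * (1 / s) := by
                apply mul_le_mul (hbound i) ?_ (abs_nonneg _)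
                  (IntPoly.good_nonneg hNG hsym _)
                rw [abs_sub_comm]
                exact happrox i
        have h3 : (∑ i, Nf (IntPoly.sing i) * (1 / s)) = K / s := by
          rw [← Finset.sum_mul, ← hKdef]
          field_simp
        linarith
      have hxu : Nf w ≤ K / s := by
        have h1 := IntPoly.good_bound hNG hsym w
        have h2 : (∑ i, |w i| * Nf (IntPoly.sing i)) ≤ ∑ i, (1 / s) * Nf (IntPoly.sing i) := by
          apply Finset.sum_le_sum
          intro i _
          apply mul_le_mul_of_nonneg_right ?_ (IntPoly.good_nonneg hNG hsym _)
          show |x i - u i| ≤ 1 / (s : ℝ)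
          exact happrox i
        have h3 : (∑ i, (1 / s : ℝ) * Nf (IntPoly.sing i)) = K / s := by
          rw [← Finset.mul_sum, ← hKdef]
          field_simp
        linarith
      have hd2 : K / s + K / s ≤ (2 * K + 1) / s := by
        rw [← add_div, div_le_div_iff₀ hs0 hs0]
        nlinarith
      have hNfu : Nf u ≤ 1 + K / s := by
        rw [hsum_u]
        exact hsplit
      linarith
end

section
/- Let C ⊆ ℝ^d be a nonempty compact convex set with support function N(x) = max_{y ∈ C} ⟨x, y⟩, and let y₀ ∈ C be a point exposed by x₀ ∈ ℝ^d, meaning ⟨x₀, y⟩ < ⟨x₀, y₀⟩ for every y ∈ C \ {y₀}. If (xₙ) is a sequence in ℝ^d with supₙ ‖xₙ − n·x₀‖ < ∞, then limₙ (N(xₙ) − ⟨xₙ, y₀⟩) = 0. -/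
open RealInnerProductSpace Filter

/-- If `y₀ ∈ C` is exposed by `x₀`, then along any sequence `xₙ` staying at bounded
distance from `n • x₀`, the support function `N(xₙ)` differs from `⟪xₙ, y₀⟫` by `o(1)`. -/
theorem support_function_almost_attained_at_exposed_point
    (d : ℕ) (C : Set (EuclideanSpace ℝ (Fin d)))
    (hCne : C.Nonempty) (hCcomp : IsCompact C) (hCconv : Convex ℝ C)
    (N : EuclideanSpace ℝ (Fin d) → ℝ)
    (hN : ∀ x : EuclideanSpace ℝ (Fin d),
      IsGreatest ((fun y => ⟪x, y⟫) '' C) (N x))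
    (y₀ : EuclideanSpace ℝ (Fin d)) (hy₀ : y₀ ∈ C)
    (x₀ : EuclideanSpace ℝ (Fin d))
    (hexp : ∀ y ∈ C, y ≠ y₀ → ⟪x₀, y⟫ < ⟪x₀, y₀⟫)
    (x : ℕ → EuclideanSpace ℝ (Fin d))
    (hx : ∃ M : ℝ, ∀ n : ℕ, ‖x n - (n : ℝ) • x₀‖ ≤ M) :
    Tendsto (fun n => N (x n) - ⟪x n, y₀⟫) atTop (nhds 0) := by
  classical
  obtain ⟨M, hM⟩ := hx
  have hM0 : 0 ≤ M := le_trans (norm_nonneg _) (hM 0)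
  -- choose maximizers
  have hsel : ∀ n : ℕ, ∃ z ∈ C, ⟪x n, z⟫ = N (x n) := by
    intro n
    obtain ⟨z, hzC, hz⟩ := (hN (x n)).1
    exact ⟨z, hzC, hz⟩
  choose y hyC hyN using hsel
  -- weak exposedness : sup over C is at y₀
  have hle : ∀ z ∈ C, ⟪x₀, z⟫ ≤ ⟪x₀, y₀⟫ := by
    intro z hz
    rcases eq_or_ne z y₀ with rfl | h
    · exact le_rfl
    · exact (hexp z hz h).le
  -- bound on distances in C
  obtain ⟨D, hD0, hD⟩ : ∃ D : ℝ, 0 ≤ D ∧ ∀ z ∈ C, ‖z - y₀‖ ≤ D := by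
    obtain ⟨r, hr⟩ := hCcomp.isBounded.subset_closedBall y₀
    refine ⟨max r 0, le_max_right _ _, fun z hz => ?_⟩
    have := hr hz
    rw [Metric.mem_closedBall] at this
    calc ‖z - y₀‖ = dist z y₀ := (dist_eq_norm z y₀).symm
      _ ≤ r := this
      _ ≤ max r 0 := le_max_left _ _
  set a : ℕ → ℝ := fun n => N (x n) - ⟪x n, y₀⟫ with ha
  have ha0 : ∀ n, 0 ≤ a n := by
    intro n
    have : ⟪x n, y₀⟫ ≤ N (x n) := (hN (x n)).2 ⟨y₀, hy₀, rfl⟩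
    simpa [ha] using this
  have haeq : ∀ n : ℕ, a n = ⟪x n - (n : ℝ) • x₀, y n - y₀⟫
      + (n : ℝ) * ⟪x₀, y n - y₀⟫ := by
    intro n
    simp only [ha, ← hyN n, inner_sub_left, inner_sub_right, real_inner_smul_left]
    ring
  have hCS : ∀ n : ℕ, ⟪x n - (n : ℝ) • x₀, y n - y₀⟫ ≤ M * ‖y n - y₀‖ := by
    intro n
    calc ⟪x n - (n : ℝ) • x₀, y n - y₀⟫ ≤ ‖x n - (n : ℝ) • x₀‖ * ‖y n - y₀‖ :=
          real_inner_le_norm _ _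
      _ ≤ M * ‖y n - y₀‖ := by
          exact mul_le_mul_of_nonneg_right (hM n) (norm_nonneg _)
  -- the "angle gap" tends to 0
  have hf0 : Tendsto (fun n => ⟪x₀, y₀⟫ - ⟪x₀, y n⟫) atTop (nhds 0) := by
    have hfle : ∀ᶠ n : ℕ in atTop,
        ⟪x₀, y₀⟫ - ⟪x₀, y n⟫ ≤ M * D / n := by
      filter_upwards [eventually_ge_atTop 1] with n hn
      have hn0 : (0 : ℝ) < n := by exact_mod_cast hn
      have h1 : (n : ℝ) * ⟪x₀, y n - y₀⟫ ≥ -(M * D) := by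
        have := ha0 n
        rw [haeq n] at this
        have h2 : ⟪x n - (n : ℝ) • x₀, y n - y₀⟫ ≤ M * D := by
          calc ⟪x n - (n : ℝ) • x₀, y n - y₀⟫ ≤ M * ‖y n - y₀‖ := hCS n
            _ ≤ M * D := mul_le_mul_of_nonneg_left (hD _ (hyC n)) hM0
        linarith
      rw [ge_iff_le, neg_le, ← mul_neg] at h1
      have h3 : -⟪x₀, y n - y₀⟫ ≤ M * D / n := by
        rw [le_div_iff₀ hn0]
        linarith [h1]
      rw [inner_sub_right] at h3
      linarith
    have hfge : ∀ᶠ n : ℕ in atTop, 0 ≤ ⟪x₀, y₀⟫ - ⟪x₀, y n⟫ :=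
      Eventually.of_forall fun n => sub_nonneg.mpr (hle _ (hyC n))
    exact squeeze_zero' hfge hfle (tendsto_const_div_atTop_nhds_zero_nat (M * D))
  -- maximizers converge to y₀
  have hty : Tendsto y atTop (nhds y₀) := by
    rw [Metric.tendsto_atTop]
    intro ε hε
    by_cases hK : (C ∩ {z | ε ≤ dist z y₀}).Nonempty
    · have hKc : IsCompact (C ∩ {z | ε ≤ dist z y₀}) :=
        hCcomp.inter_right (isClosed_le continuous_const
          (Continuous.dist continuous_id continuous_const))
      have hcont : ContinuousOn (fun z => ⟪x₀, y₀⟫ - ⟪x₀, z⟫)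
          (C ∩ {z | ε ≤ dist z y₀}) :=
        (continuous_const.sub (continuous_const.inner continuous_id)).continuousOn
      obtain ⟨z, hzK, hmin⟩ := hKc.exists_isMinOn hK hcont
      have hzne : z ≠ y₀ := by
        intro h
        have h2 : ε ≤ dist y₀ y₀ := h ▸ hzK.2
        rw [dist_self] at h2
        linarith
      have hδ : 0 < ⟪x₀, y₀⟫ - ⟪x₀, z⟫ := sub_pos.mpr (hexp z hzK.1 hzne)
      have hev := hf0.eventually (gt_mem_nhds hδ)
      rw [eventually_atTop] at hev
      obtain ⟨N₀, hN₀⟩ := hev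
      refine ⟨N₀, fun n hn => ?_⟩
      by_contra h
      push_neg at h
      have hmem : y n ∈ C ∩ {z | ε ≤ dist z y₀} := ⟨hyC n, h⟩
      have := hmin hmem
      have h2 := hN₀ n hn
      simp only [Set.mem_setOf_eq] at this
      linarith [this, h2]
    · refine ⟨0, fun n _ => ?_⟩
      by_contra h
      push_neg at h
      exact hK ⟨y n, hyC n, h⟩
  have hnorm : Tendsto (fun n => ‖y n - y₀‖) atTop (nhds 0) := by
    have : Tendsto (fun n => y n - y₀) atTop (nhds (y₀ - y₀)) :=
      hty.sub tendsto_const_nhds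
    rw [sub_self] at this
    simpa using this.norm
  -- final squeeze
  have hub : ∀ n : ℕ, a n ≤ M * ‖y n - y₀‖ := by
    intro n
    have h1 : (n : ℝ) * ⟪x₀, y n - y₀⟫ ≤ 0 := by
      apply mul_nonpos_of_nonneg_of_nonpos (Nat.cast_nonneg n)
      rw [inner_sub_right]
      linarith [hle _ (hyC n)]
    rw [haeq n]
    linarith [hCS n]
  have hlim : Tendsto (fun n => M * ‖y n - y₀‖) atTop (nhds 0) := by
    simpa using hnorm.const_mul M
  exact squeeze_zero ha0 hub hlim
end

section
/- Let d ≥ 1 and let N : ℝ^d → ℝ be a seminorm taking integer values on ℤ^d, and let B* = {y ∈ ℝ^d : ⟨x, y⟩ ≤ N(x) for all x ∈ ℝ^d} be the dual unit ball. Then every exposed point y₀ of B* lies in ℤ^d, i.e., all coordinates of y₀ are integers. -/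
open RealInnerProductSpace Filter


lemma dual_attain (d : ℕ) (N : EuclideanSpace ℝ (Fin d) → ℝ)
    (hhom : ∀ (c : ℝ) (x : EuclideanSpace ℝ (Fin d)), N (c • x) = |c| * N x)
    (hadd : ∀ x y : EuclideanSpace ℝ (Fin d), N (x + y) ≤ N x + N y)
    (x : EuclideanSpace ℝ (Fin d)) :
    ∃ y : EuclideanSpace ℝ (Fin d), (∀ z, ⟪z, y⟫ ≤ N z) ∧ ⟪x, y⟫ = N x := by
  have hN0 : N 0 = 0 := by simpa using hhom 0 0
  have hnn : ∀ z, 0 ≤ N z := by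
    intro z
    have h1 : N (z + (-1 : ℝ) • z) ≤ N z + N ((-1:ℝ) • z) := hadd _ _
    rw [hhom (-1) z] at h1
    simp at h1
    linarith
  rcases eq_or_ne x 0 with rfl | hx
  · refine ⟨0, fun z => by simpa using hnn z, by simp [hN0]⟩
  · set f := LinearPMap.mkSpanSingleton (K := ℝ) (σ := RingHom.id ℝ) x (N x) hx with hf
    have hfle : ∀ z : f.domain, f z ≤ N z := by
      rintro ⟨z, hz⟩
      obtain ⟨c, rfl⟩ := Submodule.mem_span_singleton.mp hz
      have : f ⟨c • x, hz⟩ = c • N x := LinearPMap.mkSpanSingleton'_apply _ _ _ c _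
      rw [this, hhom c x]
      have : c * N x ≤ |c| * N x := mul_le_mul_of_nonneg_right (le_abs_self c) (hnn x)
      simpa using this
    obtain ⟨g, hg1, hg2⟩ := exists_extension_of_le_sublinear f N
      (fun c hc z => by rw [hhom c z, abs_of_pos hc]) hadd hfle
    set y := (InnerProductSpace.toDual ℝ (EuclideanSpace ℝ (Fin d))).symm
      (LinearMap.toContinuousLinearMap g) with hy
    have hyz : ∀ z, ⟪y, z⟫ = g z := fun z =>
      InnerProductSpace.toDual_symm_apply
    refine ⟨y, fun z => by rw [real_inner_comm, hyz]; exact hg2 z, ?_⟩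
    rw [real_inner_comm, hyz]
    have := hg1 ⟨x, Submodule.mem_span_singleton_self x⟩
    rw [this, LinearPMap.mkSpanSingleton_apply]

lemma dual_compact (d : ℕ) (N : EuclideanSpace ℝ (Fin d) → ℝ)
    (hhom : ∀ (c : ℝ) (x : EuclideanSpace ℝ (Fin d)), N (c • x) = |c| * N x)
    (hadd : ∀ x y : EuclideanSpace ℝ (Fin d), N (x + y) ≤ N x + N y) :
    IsCompact {y : EuclideanSpace ℝ (Fin d) | ∀ x, ⟪x, y⟫ ≤ N x} := by
  have hN0 : N 0 = 0 := by simpa using hhom 0 0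
  have hnn : ∀ z, 0 ≤ N z := by
    intro z
    have h1 : N (z + (-1 : ℝ) • z) ≤ N z + N ((-1:ℝ) • z) := hadd _ _
    rw [hhom (-1) z] at h1
    simp at h1
    linarith
  -- subadditivity over finite sums
  have hsum : ∀ (s : Finset (Fin d)) (f : Fin d → EuclideanSpace ℝ (Fin d)),
      N (∑ i ∈ s, f i) ≤ ∑ i ∈ s, N (f i) := by
    intro s f
    induction s using Finset.cons_induction with
    | empty => simp [hN0]
    | cons a s ha ih =>
      rw [Finset.sum_cons, Finset.sum_cons]
      calc N (f a + ∑ i ∈ s, f i) ≤ N (f a) + N (∑ i ∈ s, f i) := hadd _ _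
        _ ≤ N (f a) + ∑ i ∈ s, N (f i) := by linarith
  set C : ℝ := ∑ i, N (EuclideanSpace.single i 1) with hC
  have hNle : ∀ y : EuclideanSpace ℝ (Fin d), N y ≤ C * ‖y‖ := by
    intro y
    have hdecomp : y = ∑ i, (y i) • EuclideanSpace.single i (1:ℝ) := by
      have := (EuclideanSpace.basisFun (Fin d) ℝ).sum_repr y
      simp only [EuclideanSpace.basisFun_repr, EuclideanSpace.basisFun_apply] at this
      exact this.symm
    calc N y = N (∑ i, (y i) • EuclideanSpace.single i (1:ℝ)) := by rw [← hdecomp]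
      _ ≤ ∑ i, N ((y i) • EuclideanSpace.single i (1:ℝ)) := hsum _ _
      _ = ∑ i, |y i| * N (EuclideanSpace.single i 1) := by
          simp_rw [hhom]
      _ ≤ ∑ i, ‖y‖ * N (EuclideanSpace.single i 1) := by
          apply Finset.sum_le_sum
          intro i _
          apply mul_le_mul_of_nonneg_right _ (hnn _)
          simpa [EuclideanSpace.inner_single_left, EuclideanSpace.norm_single] using
            abs_real_inner_le_norm (EuclideanSpace.single i (1:ℝ)) y
      _ = C * ‖y‖ := by rw [← Finset.mul_sum, mul_comm]
  apply Metric.isCompact_of_isClosed_isBounded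
  · have : {y : EuclideanSpace ℝ (Fin d) | ∀ x, ⟪x, y⟫ ≤ N x} =
        ⋂ x, {y | ⟪x, y⟫ ≤ N x} := by ext y; simp
    rw [this]
    exact isClosed_iInter fun x =>
      isClosed_le (Continuous.inner continuous_const continuous_id) continuous_const
  · rw [Metric.isBounded_iff_subset_closedBall 0]
    refine ⟨C, fun y hy => ?_⟩
    simp only [Metric.mem_closedBall, dist_zero_right]
    have h1 : ‖y‖ * ‖y‖ ≤ C * ‖y‖ := by
      calc ‖y‖ * ‖y‖ = ⟪y, y⟫ := (real_inner_self_eq_norm_mul_norm y).symm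
        _ ≤ N y := hy y
        _ ≤ C * ‖y‖ := hNle y
    rcases eq_or_lt_of_le (norm_nonneg y) with h | h
    · rw [← h]; exact Finset.sum_nonneg fun i _ => hnn _
    · exact le_of_mul_le_mul_right h1 h


/-- Every exposed point of the dual unit ball of a seminorm on `ℝ^d` taking integer
values on `ℤ^d` has integer coordinates. -/
theorem exposed_points_of_dual_ball_are_integral
    (d : ℕ) (hd : 1 ≤ d) (N : EuclideanSpace ℝ (Fin d) → ℝ)
    (hhom : ∀ (c : ℝ) (x : EuclideanSpace ℝ (Fin d)), N (c • x) = |c| * N x)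
    (hadd : ∀ x y : EuclideanSpace ℝ (Fin d), N (x + y) ≤ N x + N y)
    (hint : ∀ x : EuclideanSpace ℝ (Fin d),
      (∀ i, ∃ m : ℤ, x i = (m : ℝ)) → ∃ m : ℤ, N x = (m : ℝ))
    (Bstar : Set (EuclideanSpace ℝ (Fin d)))
    (hBstar : Bstar = {y : EuclideanSpace ℝ (Fin d) |
      ∀ x : EuclideanSpace ℝ (Fin d), ⟪x, y⟫ ≤ N x})
    (y₀ : EuclideanSpace ℝ (Fin d)) (hy₀ : y₀ ∈ Bstar)
    (hexp : ∃ x₀ : EuclideanSpace ℝ (Fin d),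
      ∀ y ∈ Bstar, y ≠ y₀ → ⟪x₀, y⟫ < ⟪x₀, y₀⟫) :
    ∀ i, ∃ m : ℤ, y₀ i = (m : ℝ) := by
  have hcomp : IsCompact Bstar := hBstar ▸ dual_compact d N hhom hadd
  rw [hBstar] at hy₀
  simp only [Set.mem_setOf_eq] at hy₀
  obtain ⟨x₀, hx₀⟩ := hexp
  -- key: any sequence of "approximate maximizers" converges to the exposed point
  have key : ∀ (u v : ℕ → EuclideanSpace ℝ (Fin d)),
      (∀ n, u n ∈ Bstar) → Tendsto v atTop (nhds x₀) →
      (∀ n, ⟪v n, y₀⟫ ≤ ⟪v n, u n⟫) →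
      Tendsto u atTop (nhds y₀) := by
    intro u v hu hv hle
    apply tendsto_of_subseq_tendsto
    intro ns hns
    obtain ⟨L, hL, φ, hφ, hconv⟩ :=
      hcomp.tendsto_subseq (x := fun n => u (ns n)) (fun n => hu (ns n))
    refine ⟨φ, ?_⟩
    have hLy : L = y₀ := by
      by_contra hne
      have hlt := hx₀ L hL hne
      have htv : Tendsto (fun k => v (ns (φ k))) atTop (nhds x₀) :=
        hv.comp (hns.comp hφ.tendsto_atTop)
      have h1 : Tendsto (fun k => ⟪v (ns (φ k)), u (ns (φ k))⟫) atTop (nhds ⟪x₀, L⟫) :=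
        htv.inner hconv
      have h2 : Tendsto (fun k => ⟪v (ns (φ k)), y₀⟫) atTop (nhds ⟪x₀, y₀⟫) :=
        htv.inner tendsto_const_nhds
      have := le_of_tendsto_of_tendsto' h2 h1 (fun k => hle _)
      linarith
    rw [← hLy]; exact hconv
  intro i
  set e : EuclideanSpace ℝ (Fin d) := EuclideanSpace.single i 1 with he
  set z : ℕ → EuclideanSpace ℝ (Fin d) :=
    fun n => WithLp.toLp 2 ((fun j => (round ((n : ℝ) * x₀ j) : ℝ) : Fin d → ℝ)) with hzdef
  have hzap : ∀ n j, z n j = (round ((n : ℝ) * x₀ j) : ℝ) := fun n j => rfl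
  -- z n / n → x₀
  have hvx : Tendsto (fun n : ℕ => ((n : ℝ))⁻¹ • z n) atTop (nhds x₀) := by
    rw [tendsto_iff_norm_sub_tendsto_zero]
    apply squeeze_zero' (Eventually.of_forall fun n => norm_nonneg _)
      (g := fun n : ℕ => Real.sqrt d * (n : ℝ)⁻¹)
    · filter_upwards [eventually_ge_atTop 1] with n hn
      have hn' : (0 : ℝ) < n := by exact_mod_cast Nat.pos_of_ne_zero (by omega)
      rw [EuclideanSpace.norm_eq]
      have hbound : ∀ j, ‖((n : ℝ)⁻¹ • z n - x₀) j‖ ^ 2 ≤ ((n : ℝ)⁻¹) ^ 2 := by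
        intro j
        have happ : ((n : ℝ)⁻¹ • z n - x₀) j = (n : ℝ)⁻¹ * z n j - x₀ j := rfl
        have : |(n : ℝ)⁻¹ * z n j - x₀ j| ≤ (n : ℝ)⁻¹ := by
          rw [hzap]
          have h1 : |((round ((n : ℝ) * x₀ j) : ℝ)) - (n : ℝ) * x₀ j| ≤ 1 / 2 := by
            have := abs_sub_round ((n : ℝ) * x₀ j)
            rw [abs_sub_comm] at this
            linarith
          have h2 : (n : ℝ)⁻¹ * ((round ((n : ℝ) * x₀ j) : ℝ)) - x₀ j
              = (n : ℝ)⁻¹ * ((round ((n : ℝ) * x₀ j) : ℝ) - (n : ℝ) * x₀ j) := by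
            field_simp
          rw [h2, abs_mul, abs_of_nonneg (by positivity : (0:ℝ) ≤ (n:ℝ)⁻¹)]
          calc (n : ℝ)⁻¹ * |(round ((n : ℝ) * x₀ j) : ℝ) - (n : ℝ) * x₀ j|
              ≤ (n : ℝ)⁻¹ * 1 := by
                apply mul_le_mul_of_nonneg_left _ (by positivity)
                linarith
            _ = (n : ℝ)⁻¹ := mul_one _
        rw [happ]
        calc ‖(n : ℝ)⁻¹ * z n j - x₀ j‖ ^ 2 = |(n : ℝ)⁻¹ * z n j - x₀ j| ^ 2 := rfl
          _ ≤ ((n : ℝ)⁻¹) ^ 2 := pow_le_pow_left₀ (abs_nonneg _) this 2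
      calc Real.sqrt (∑ j, ‖((n : ℝ)⁻¹ • z n - x₀) j‖ ^ 2)
          ≤ Real.sqrt (∑ _j : Fin d, ((n : ℝ)⁻¹) ^ 2) :=
            Real.sqrt_le_sqrt (Finset.sum_le_sum fun j _ => hbound j)
        _ = Real.sqrt d * (n : ℝ)⁻¹ := by
            rw [Finset.sum_const, Finset.card_univ, Fintype.card_fin, nsmul_eq_mul,
              Real.sqrt_mul (by positivity), Real.sqrt_sq (by positivity)]
    · simpa using tendsto_const_nhds.mul (tendsto_inv_atTop_nhds_zero_nat (𝕜 := ℝ))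
  have hvx' : Tendsto (fun n : ℕ => ((n : ℝ))⁻¹ • (z n + e)) atTop (nhds x₀) := by
    have heq : (fun n : ℕ => ((n : ℝ))⁻¹ • (z n + e))
        = fun n : ℕ => ((n : ℝ))⁻¹ • z n + ((n : ℝ))⁻¹ • e := by
      funext n; rw [smul_add]
    rw [heq]
    have h0 : Tendsto (fun n : ℕ => ((n : ℝ))⁻¹ • e) atTop (nhds 0) := by
      simpa using (tendsto_inv_atTop_nhds_zero_nat (𝕜 := ℝ)).smul_const e
    simpa using hvx.add h0
  choose g hg1 hg2 using fun n => dual_attain d N hhom hadd (z n)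
  choose h hh1 hh2 using fun n => dual_attain d N hhom hadd (z n + e)
  have hgB : ∀ n, g n ∈ Bstar := fun n => by rw [hBstar]; exact hg1 n
  have hhB : ∀ n, h n ∈ Bstar := fun n => by rw [hBstar]; exact hh1 n
  have hgy : Tendsto g atTop (nhds y₀) := by
    apply key g (fun n : ℕ => ((n : ℝ))⁻¹ • z n) hgB hvx
    intro n
    rw [real_inner_smul_left, real_inner_smul_left, hg2 n]
    exact mul_le_mul_of_nonneg_left (hy₀ (z n)) (by positivity)
  have hhy : Tendsto h atTop (nhds y₀) := by
    apply key h (fun n : ℕ => ((n : ℝ))⁻¹ • (z n + e)) hhB hvx'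
    intro n
    rw [real_inner_smul_left, real_inner_smul_left, hh2 n]
    exact mul_le_mul_of_nonneg_left (hy₀ (z n + e)) (by positivity)
  have hcoord : ∀ (w : EuclideanSpace ℝ (Fin d)), ⟪e, w⟫ = w i := by
    intro w; rw [he, EuclideanSpace.inner_single_left]; simp
  have hgi : Tendsto (fun n => g n i) atTop (nhds (y₀ i)) := by
    have : Tendsto (fun n => ⟪e, g n⟫) atTop (nhds ⟪e, y₀⟫) :=
      tendsto_const_nhds.inner hgy
    simpa only [hcoord] using this
  have hhi : Tendsto (fun n => h n i) atTop (nhds (y₀ i)) := by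
    have : Tendsto (fun n => ⟪e, h n⟫) atTop (nhds ⟪e, y₀⟫) :=
      tendsto_const_nhds.inner hhy
    simpa only [hcoord] using this
  -- the integer sequence
  have hzeint : ∀ n, ∃ m : ℤ, N (z n + e) = m := by
    intro n
    apply hint
    intro j
    refine ⟨round ((n : ℝ) * x₀ j) + (if j = i then 1 else 0), ?_⟩
    have happ : (z n + e) j = z n j + e j := rfl
    rw [happ, hzap, he]
    have : (EuclideanSpace.single i (1:ℝ)) j = if j = i then 1 else 0 :=
      EuclideanSpace.single_apply i 1 j
    rw [this]
    split <;> push_cast <;> ring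
  have hzint : ∀ n, ∃ m : ℤ, N (z n) = m :=
    fun n => hint (z n) (fun j => ⟨round ((n : ℝ) * x₀ j), rfl⟩)
  choose m1 hm1 using hzeint
  choose m2 hm2 using hzint
  set a : ℕ → ℝ := fun n => N (z n + e) - N (z n) with ha
  have haint : ∀ n, a n = ((m1 n - m2 n : ℤ) : ℝ) := by
    intro n; rw [ha]; push_cast; rw [hm1 n, hm2 n]
  have hlow : ∀ n, g n i ≤ a n := by
    intro n
    have h1 : ⟪z n + e, g n⟫ ≤ N (z n + e) := hg1 n _
    rw [inner_add_left, hg2 n, hcoord] at h1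
    simp only [ha]; linarith
  have hupp : ∀ n, a n ≤ h n i := by
    intro n
    have h1 : ⟪z n, h n⟫ ≤ N (z n) := hh1 n _
    have h2 := hh2 n
    rw [inner_add_left, hcoord] at h2
    simp only [ha]; linarith
  have hconva : Tendsto a atTop (nhds (y₀ i)) :=
    tendsto_of_tendsto_of_tendsto_of_le_of_le hgi hhi hlow hupp
  obtain ⟨n₀, hn₀⟩ := Metric.tendsto_atTop.mp hconva (1 / 2) (by norm_num)
  refine ⟨m1 n₀ - m2 n₀, ?_⟩
  have hconst : ∀ n ≥ n₀, a n = a n₀ := by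
    intro n hn
    have d1 := hn₀ n hn
    have d2 := hn₀ n₀ le_rfl
    rw [Real.dist_eq] at d1 d2
    have habs : |a n - a n₀| < 1 := by
      calc |a n - a n₀| = |(a n - y₀ i) - (a n₀ - y₀ i)| := by ring_nf
        _ ≤ |a n - y₀ i| + |a n₀ - y₀ i| := abs_sub _ _
        _ < 1 := by linarith
    rw [haint n, haint n₀] at habs ⊢
    have : |((m1 n - m2 n) - (m1 n₀ - m2 n₀) : ℤ)| < 1 := by
      have : |(((m1 n - m2 n) - (m1 n₀ - m2 n₀) : ℤ) : ℝ)| < 1 := by push_cast at habs ⊢; linarith [habs]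
      exact_mod_cast this
    have := Int.abs_lt_one_iff.mp this
    have : (m1 n - m2 n : ℤ) = (m1 n₀ - m2 n₀ : ℤ) := by omega
    rw [this]
  have hconsta : Tendsto a atTop (nhds (a n₀)) := by
    apply Tendsto.congr' _ (tendsto_const_nhds (x := a n₀))
    filter_upwards [eventually_ge_atTop n₀] with n hn
    exact (hconst n hn).symm
  have := tendsto_nhds_unique hconva hconsta
  rw [this, haint n₀]
end

section
/- Let C ⊆ ℝ^d be a compact convex set, and let y₀ ∈ C be a point exposed by x₀ ∈ ℝ^d with the normalization ⟨x₀, y₀⟩ = 1. Let (xₙ) be a sequence in ℝ^d with supₙ ‖xₙ − n·x₀‖ < ∞, and for each n let yₙ ∈ C satisfy ⟨xₙ, yₙ⟩ = max_{y ∈ C} ⟨xₙ, y⟩. Then limₙ ‖yₙ − y₀‖ = 0. -/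
open RealInnerProductSpace Filter

/-- If `y₀ ∈ C` is exposed by `x₀` with `⟪x₀, y₀⟫ = 1`, and `xₙ` stays at bounded
distance from `n • x₀`, then any maximizers `yₙ` of `y ↦ ⟪xₙ, y⟫` on `C` converge to `y₀`. -/
theorem maximizers_converge_to_exposed_point
    (d : ℕ) (C : Set (EuclideanSpace ℝ (Fin d)))
    (hCcomp : IsCompact C) (hCconv : Convex ℝ C)
    (y₀ : EuclideanSpace ℝ (Fin d)) (hy₀ : y₀ ∈ C)
    (x₀ : EuclideanSpace ℝ (Fin d))
    (hexp : ∀ y ∈ C, y ≠ y₀ → ⟪x₀, y⟫ < ⟪x₀, y₀⟫)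
    (hnorm : ⟪x₀, y₀⟫ = 1)
    (x : ℕ → EuclideanSpace ℝ (Fin d))
    (hx : ∃ M : ℝ, ∀ n : ℕ, ‖x n - (n : ℝ) • x₀‖ ≤ M)
    (y : ℕ → EuclideanSpace ℝ (Fin d)) (hyC : ∀ n, y n ∈ C)
    (hmax : ∀ n, IsGreatest ((fun y' => ⟪x n, y'⟫) '' C) ⟪x n, y n⟫) :
    Tendsto (fun n => ‖y n - y₀‖) atTop (nhds 0) := by
  obtain ⟨M, hM⟩ := hx
  obtain ⟨R, hR⟩ := hCcomp.isBounded.exists_norm_le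
  -- key inequality: n * (1 - ⟪x₀, y n⟫) ≤ M * (2 * R)
  have key : ∀ n : ℕ, (n : ℝ) * (1 - ⟪x₀, y n⟫) ≤ M * (2 * R) := by
    intro n
    have h1 : ⟪x n, y₀⟫ ≤ ⟪x n, y n⟫ := (hmax n).2 ⟨y₀, hy₀, rfl⟩
    have h2 : ⟪x n - (n : ℝ) • x₀, y n - y₀⟫ ≤ M * (2 * R) := by
      calc ⟪x n - (n : ℝ) • x₀, y n - y₀⟫ ≤ ‖x n - (n : ℝ) • x₀‖ * ‖y n - y₀‖ :=
            real_inner_le_norm _ _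
        _ ≤ M * (2 * R) := by
            have hnn : (0:ℝ) ≤ ‖x n - (n : ℝ) • x₀‖ := norm_nonneg _
            have : ‖y n - y₀‖ ≤ 2 * R := by
              calc ‖y n - y₀‖ ≤ ‖y n‖ + ‖y₀‖ := norm_sub_le _ _
                _ ≤ R + R := add_le_add (hR _ (hyC n)) (hR _ hy₀)
                _ = 2 * R := by ring
            exact mul_le_mul (hM n) this (norm_nonneg _) ((hnn.trans (hM n)))
    have expand : ⟪x n - (n : ℝ) • x₀, y n - y₀⟫
        = ⟪x n, y n⟫ - ⟪x n, y₀⟫ - (n : ℝ) * (⟪x₀, y n⟫ - ⟪x₀, y₀⟫) := by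
      rw [inner_sub_left, inner_sub_right, inner_sub_right, real_inner_smul_left,
        real_inner_smul_left]; ring
    have : (n : ℝ) * (⟪x₀, y₀⟫ - ⟪x₀, y n⟫) ≤ ⟪x n - (n : ℝ) • x₀, y n - y₀⟫ := by
      rw [expand]; nlinarith
    rw [hnorm] at this
    linarith
  have hle1 : ∀ n, ⟪x₀, y n⟫ ≤ 1 := by
    intro n
    rcases eq_or_ne (y n) y₀ with h | h
    · rw [h, hnorm]
    · exact le_of_lt (hnorm ▸ hexp _ (hyC n) h)
  -- ⟪x₀, y n⟫ → 1
  have hinner : Tendsto (fun n => ⟪x₀, y n⟫) atTop (nhds 1) := by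
    have hlow : Tendsto (fun n : ℕ => 1 - M * (2 * R) / (n : ℝ)) atTop (nhds 1) := by
      have h1 : Tendsto (fun n : ℕ => M * (2 * R) / (n : ℝ)) atTop (nhds 0) :=
        Tendsto.div_atTop tendsto_const_nhds tendsto_natCast_atTop_atTop
      have h2 : Tendsto (fun n : ℕ => (1:ℝ) - M * (2 * R) / (n : ℝ)) atTop (nhds (1 - 0)) :=
        tendsto_const_nhds.sub h1
      simpa using h2
    refine tendsto_of_tendsto_of_tendsto_of_le_of_le' hlow tendsto_const_nhds ?_
      (Eventually.of_forall hle1)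
    filter_upwards [eventually_ge_atTop 1] with n hn
    have hnpos : (0:ℝ) < (n : ℝ) := by exact_mod_cast hn
    have h : 1 - ⟪x₀, y n⟫ ≤ M * (2 * R) / (n : ℝ) :=
      (le_div_iff₀ hnpos).mpr (by linarith [key n])
    linarith
  -- subsequence argument
  have hy : Tendsto y atTop (nhds y₀) := by
    refine tendsto_of_subseq_tendsto fun ns hns => ?_
    obtain ⟨z, hzC, φ, hφ, hconv⟩ := hCcomp.tendsto_subseq (fun n => hyC (ns n))
    refine ⟨φ, ?_⟩
    have hz : z = y₀ := by
      by_contra hne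
      have hlt : ⟪x₀, z⟫ < 1 := hnorm ▸ hexp _ hzC hne
      have h1 : Tendsto (fun n => ⟪x₀, y (ns (φ n))⟫) atTop (nhds ⟪x₀, z⟫) :=
        ((continuous_const.inner continuous_id).continuousAt.tendsto.comp hconv)
      have h2 : Tendsto (fun n => ⟪x₀, y (ns (φ n))⟫) atTop (nhds 1) :=
        hinner.comp ((hns.comp hφ.tendsto_atTop))
      exact absurd (tendsto_nhds_unique h1 h2) (ne_of_lt hlt)
    rw [← hz]
    exact hconv
  have h0 : Tendsto (fun n => y n - y₀) atTop (nhds (y₀ - y₀)) :=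
    hy.sub tendsto_const_nhds
  rw [sub_self] at h0
  simpa using h0.norm
end

section
/- Let d ≥ 1 and let N : ℝ^d → ℝ be a seminorm taking integer values on ℤ^d, with dual unit ball B* = {y ∈ ℝ^d : ⟨x, y⟩ ≤ N(x) for all x ∈ ℝ^d}. Let y₀ ∈ B* be a point exposed by x₀ ∈ ℝ^d, and for each n let xₙ ∈ ℤ^d be a lattice point at minimal Euclidean distance from n·x₀. Then limₙ dist(⟨xₙ, y₀⟩, ℤ) = 0, where dist(t, ℤ) denotes the distance from the real number t to the nearest integer. -/
open RealInnerProductSpace Filter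

private lemma N_sum_le' {E : Type*} [AddCommGroup E] {N : E → ℝ}
    (hN0 : N 0 = 0) (hadd : ∀ x y, N (x + y) ≤ N x + N y)
    {ι : Type*} [DecidableEq ι] (s : Finset ι) (f : ι → E) :
    N (∑ i ∈ s, f i) ≤ ∑ i ∈ s, N (f i) := by
  induction s using Finset.induction with
  | empty => simp [hN0]
  | insert _ _ h ih =>
    rw [Finset.sum_insert h, Finset.sum_insert h]
    exact (hadd _ _).trans (by linarith)

/-- If `y₀` is an exposed point of the dual unit ball of an integer-valued seminorm,
and `xₙ ∈ ℤ^d` is a closest lattice point to `n • x₀`, then `⟪xₙ, y₀⟫` tends to `ℤ`: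
its distance to the nearest integer tends to `0`. -/
theorem inner_with_exposed_point_tends_to_integers
    (d : ℕ) (hd : 1 ≤ d) (N : EuclideanSpace ℝ (Fin d) → ℝ)
    (hhom : ∀ (c : ℝ) (x : EuclideanSpace ℝ (Fin d)), N (c • x) = |c| * N x)
    (hadd : ∀ x y : EuclideanSpace ℝ (Fin d), N (x + y) ≤ N x + N y)
    (hint : ∀ x : EuclideanSpace ℝ (Fin d),
      (∀ i, ∃ m : ℤ, x i = (m : ℝ)) → ∃ m : ℤ, N x = (m : ℝ))
    (Bstar : Set (EuclideanSpace ℝ (Fin d)))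
    (hBstar : Bstar = {y : EuclideanSpace ℝ (Fin d) |
      ∀ x : EuclideanSpace ℝ (Fin d), ⟪x, y⟫ ≤ N x})
    (y₀ : EuclideanSpace ℝ (Fin d)) (hy₀ : y₀ ∈ Bstar)
    (x₀ : EuclideanSpace ℝ (Fin d))
    (hexp : ∀ y ∈ Bstar, y ≠ y₀ → ⟪x₀, y⟫ < ⟪x₀, y₀⟫)
    (x : ℕ → EuclideanSpace ℝ (Fin d))
    (hxint : ∀ n, ∀ i, ∃ m : ℤ, x n i = (m : ℝ))
    (hxmin : ∀ n, ∀ z : EuclideanSpace ℝ (Fin d), (∀ i, ∃ m : ℤ, z i = (m : ℝ)) →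
      ‖x n - (n : ℝ) • x₀‖ ≤ ‖z - (n : ℝ) • x₀‖) :
    Tendsto (fun n => |⟪x n, y₀⟫ - (round ⟪x n, y₀⟫ : ℝ)|) atTop (nhds 0) := by
  -- basic properties of N
  have hN0 : N 0 = 0 := by
    have := hhom 0 0; simpa using this
  have hNnn : ∀ v : EuclideanSpace ℝ (Fin d), 0 ≤ N v := by
    intro v
    have h1 : N (-v) = N v := by
      have := hhom (-1) v; simpa using this
    have h2 := hadd v (-v)
    rw [add_neg_cancel, hN0, h1] at h2
    linarith
  -- linear upper bound for N
  obtain ⟨M, hMnn, hM⟩ : ∃ M : ℝ, 0 ≤ M ∧ ∀ v : EuclideanSpace ℝ (Fin d), N v ≤ M * ‖v‖ := by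
    refine ⟨∑ i, N (EuclideanSpace.single i (1:ℝ)),
      Finset.sum_nonneg fun i _ => hNnn _, fun v => ?_⟩
    have hv : v = ∑ i, v i • EuclideanSpace.single i (1:ℝ) := by
      have h := (EuclideanSpace.basisFun (Fin d) ℝ).sum_repr v
      simp only [EuclideanSpace.basisFun_repr, EuclideanSpace.basisFun_apply] at h
      exact h.symm
    calc N v = N (∑ i, v i • EuclideanSpace.single i (1:ℝ)) := by rw [← hv]
      _ ≤ ∑ i, N (v i • EuclideanSpace.single i (1:ℝ)) := N_sum_le' hN0 hadd _ _
      _ = ∑ i, |v i| * N (EuclideanSpace.single i (1:ℝ)) :=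
          Finset.sum_congr rfl fun i _ => hhom _ _
      _ ≤ ∑ i, ‖v‖ * N (EuclideanSpace.single i (1:ℝ)) := by
          refine Finset.sum_le_sum fun i _ => ?_
          refine mul_le_mul_of_nonneg_right ?_ (hNnn _)
          have h := abs_real_inner_le_norm (EuclideanSpace.single i (1:ℝ)) v
          simpa [EuclideanSpace.inner_single_left] using h
      _ = (∑ i, N (EuclideanSpace.single i (1:ℝ))) * ‖v‖ := by
          rw [Finset.sum_mul]
          exact Finset.sum_congr rfl fun i _ => mul_comm _ _
  -- Bstar is bounded by M
  have hBnorm : ∀ y ∈ Bstar, ‖y‖ ≤ M := by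
    intro y hy
    rw [hBstar] at hy
    have h1 : ⟪y, y⟫ ≤ N y := hy y
    have h2 : ‖y‖ ^ 2 ≤ M * ‖y‖ := by
      rw [← real_inner_self_eq_norm_sq]
      exact h1.trans (hM y)
    nlinarith [norm_nonneg y]
  -- Bstar is compact
  have hBclosed : IsClosed Bstar := by
    rw [hBstar]
    have : {y : EuclideanSpace ℝ (Fin d) | ∀ x : EuclideanSpace ℝ (Fin d), ⟪x, y⟫ ≤ N x}
        = ⋂ v : EuclideanSpace ℝ (Fin d), {y : EuclideanSpace ℝ (Fin d) | ⟪v, y⟫ ≤ N v} := by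
      ext y; simp [Set.mem_iInter]
    rw [this]
    exact isClosed_iInter fun v =>
      isClosed_le (Continuous.inner continuous_const continuous_id) continuous_const
  have hBcompact : IsCompact Bstar := by
    refine Metric.isCompact_of_isClosed_isBounded hBclosed ?_
    exact (Metric.isBounded_iff_subset_closedBall 0).2
      ⟨M, fun y hy => by simpa [Metric.mem_closedBall] using hBnorm y hy⟩
  -- attainment of N on Bstar
  have hdual : ∀ v : EuclideanSpace ℝ (Fin d), ∃ y ∈ Bstar, ⟪v, y⟫ = N v := by
    intro v
    by_cases hv : v = 0
    · exact ⟨y₀, hy₀, by simp [hv, hN0]⟩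
    · have hf : ∀ w : (LinearPMap.mkSpanSingleton (K := ℝ) (L := ℝ) (σ := RingHom.id ℝ) v (N v) hv).domain,
          (LinearPMap.mkSpanSingleton (K := ℝ) (L := ℝ) (σ := RingHom.id ℝ) v (N v) hv) w ≤ N w := by
        rintro ⟨z, hz⟩
        obtain ⟨c, rfl⟩ := Submodule.mem_span_singleton.mp hz
        have happ : (LinearPMap.mkSpanSingleton (K := ℝ) (L := ℝ) (σ := RingHom.id ℝ) v (N v) hv) ⟨c • v, hz⟩ = c • N v :=
          LinearPMap.mkSpanSingleton'_apply _ _ _ c hz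
        rw [happ]
        have h3 : c * N v ≤ |c| * N v :=
          mul_le_mul_of_nonneg_right (le_abs_self c) (hNnn v)
        calc (c • N v : ℝ) = c * N v := rfl
          _ ≤ |c| * N v := h3
          _ = N (c • v) := (hhom c v).symm
      obtain ⟨g, hg1, hg2⟩ := exists_extension_of_le_sublinear
        (LinearPMap.mkSpanSingleton (K := ℝ) (L := ℝ) (σ := RingHom.id ℝ) v (N v) hv) N
        (fun c hc u => by rw [hhom, abs_of_pos hc]) hadd hf
      set g' : EuclideanSpace ℝ (Fin d) →L[ℝ] ℝ := LinearMap.toContinuousLinearMap g with hg'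
      refine ⟨(InnerProductSpace.toDual ℝ _).symm g', ?_, ?_⟩
      · rw [hBstar]
        intro u
        rw [real_inner_comm, InnerProductSpace.toDual_symm_apply]
        exact hg2 u
      · rw [real_inner_comm, InnerProductSpace.toDual_symm_apply]
        have h2 := hg1 ⟨v, Submodule.mem_span_singleton_self v⟩
        rw [LinearPMap.mkSpanSingleton_apply ℝ ℝ (σ := RingHom.id ℝ) hv (N v)] at h2
        exact h2
  -- bound on the rounding error
  have herr : ∀ n : ℕ, ‖x n - (n : ℝ) • x₀‖ ≤ Real.sqrt d := by
    intro n
    set z : EuclideanSpace ℝ (Fin d) :=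
      WithLp.toLp 2 (fun i => (round (((n : ℝ) • x₀ : EuclideanSpace ℝ (Fin d)) i) : ℝ)) with hz
    have hzint : ∀ i, ∃ m : ℤ, z i = (m : ℝ) := fun i => ⟨_, rfl⟩
    refine (hxmin n z hzint).trans ?_
    rw [EuclideanSpace.norm_eq]
    refine Real.sqrt_le_sqrt ?_
    calc ∑ i, ‖(z - (n : ℝ) • x₀ : EuclideanSpace ℝ (Fin d)) i‖ ^ 2
        ≤ ∑ _i : Fin d, (1:ℝ) := by
          refine Finset.sum_le_sum fun i _ => ?_
          have h1 : (z - (n : ℝ) • x₀ : EuclideanSpace ℝ (Fin d)) i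
              = z i - ((n : ℝ) • x₀ : EuclideanSpace ℝ (Fin d)) i := rfl
          rw [h1]
          have h2 : |z i - ((n : ℝ) • x₀ : EuclideanSpace ℝ (Fin d)) i| ≤ 1 := by
            simp only [hz, PiLp.toLp_apply]
            have := abs_sub_round (((n : ℝ) • x₀ : EuclideanSpace ℝ (Fin d)) i)
            rw [abs_sub_comm]
            linarith
          calc ‖z i - ((n : ℝ) • x₀ : EuclideanSpace ℝ (Fin d)) i‖ ^ 2
              = |z i - ((n : ℝ) • x₀ : EuclideanSpace ℝ (Fin d)) i| ^ 2 := by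
                rw [Real.norm_eq_abs]
            _ ≤ 1 ^ 2 := pow_le_pow_left₀ (abs_nonneg _) h2 2
            _ = 1 := one_pow 2
      _ = (d : ℝ) := by simp
  -- main argument
  rw [Metric.tendsto_atTop]
  intro ε hε
  set C : ℝ := Real.sqrt d with hC
  have hCnn : 0 ≤ C := Real.sqrt_nonneg _
  set ε' : ℝ := ε / (2 * (C + 1)) with hε'def
  have hε'pos : 0 < ε' := by positivity
  -- the δ separation property coming from exposedness and compactness
  obtain ⟨δ, hδpos, hδ⟩ : ∃ δ : ℝ, 0 < δ ∧
      ∀ y ∈ Bstar, ⟪x₀, y₀⟫ - ⟪x₀, y⟫ < δ → ‖y - y₀‖ ≤ ε' := by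
    by_cases hK : (Bstar ∩ {y | ε' ≤ ‖y - y₀‖}).Nonempty
    · have hKc : IsCompact (Bstar ∩ {y | ε' ≤ ‖y - y₀‖}) := by
        refine hBcompact.inter_right (isClosed_le continuous_const ?_)
        exact (continuous_id.sub continuous_const).norm
      have hcont : Continuous fun y : EuclideanSpace ℝ (Fin d) => ⟪x₀, y₀⟫ - ⟪x₀, y⟫ :=
        continuous_const.sub (Continuous.inner continuous_const continuous_id)
      obtain ⟨ymin, hymin, hmin'⟩ := hKc.exists_isMinOn hK hcont.continuousOn
      have hmin := isMinOn_iff.mp hmin'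
      refine ⟨⟪x₀, y₀⟫ - ⟪x₀, ymin⟫, ?_, ?_⟩
      · have hne : ymin ≠ y₀ := by
          intro h
          have := hymin.2
          rw [h] at this
          simp only [Set.mem_setOf_eq, sub_self, norm_zero] at this
          linarith
        have := hexp ymin hymin.1 hne
        linarith
      · intro y hy hlt
        by_contra hcon
        push_neg at hcon
        have hyK : y ∈ Bstar ∩ {y | ε' ≤ ‖y - y₀‖} := ⟨hy, le_of_lt hcon⟩
        have := hmin y hyK
        linarith
    · refine ⟨1, one_pos, fun y hy _ => ?_⟩
      by_contra hcon
      push_neg at hcon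
      exact hK ⟨y, hy, le_of_lt hcon⟩
  -- choose a threshold
  obtain ⟨n₀, hn₀⟩ := exists_nat_gt (C * (2 * M) / δ)
  refine ⟨n₀ + 1, fun n hn => ?_⟩
  have hnpos : (0:ℝ) < (n:ℝ) := by
    have : 1 ≤ n := le_trans (Nat.le_add_left 1 n₀) hn
    exact_mod_cast Nat.lt_of_lt_of_le Nat.zero_lt_one this
  have hngt : C * (2 * M) / δ < (n:ℝ) := by
    have h1 : (n₀ : ℝ) < (n : ℝ) := by
      exact_mod_cast Nat.lt_of_lt_of_le (Nat.lt_succ_self n₀) hn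
    linarith
  obtain ⟨yn, hynB, hynN⟩ := hdual (x n)
  have hy₀' : ∀ v : EuclideanSpace ℝ (Fin d), ⟪v, y₀⟫ ≤ N v := by
    rw [hBstar] at hy₀; exact hy₀
  set e : EuclideanSpace ℝ (Fin d) := x n - (n : ℝ) • x₀ with he
  have hxe : x n = (n : ℝ) • x₀ + e := by rw [he]; abel
  set t : ℝ := ⟪x₀, y₀⟫ - ⟪x₀, yn⟫ with ht
  -- decomposition identity
  have hiden : ⟪x n, y₀⟫ - N (x n) = (n : ℝ) * t + ⟪e, y₀ - yn⟫ := by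
    have h1 : ⟪x n, y₀ - yn⟫ = ⟪x n, y₀⟫ - N (x n) := by
      rw [inner_sub_right, hynN]
    have h2 : ⟪x n, y₀ - yn⟫ = ⟪(n : ℝ) • x₀, y₀ - yn⟫ + ⟪e, y₀ - yn⟫ := by
      conv_lhs => rw [hxe]
      exact inner_add_left _ _ _
    have h3 : ⟪(n : ℝ) • x₀, y₀ - yn⟫ = (n : ℝ) * t := by
      rw [real_inner_smul_left, inner_sub_right, ht]
    rw [← h1, h2, h3]
  have htnn : 0 ≤ t := by
    rcases eq_or_ne yn y₀ with h | h
    · rw [ht, h]; simp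
    · have := hexp yn hynB h
      rw [ht]; linarith
  have hynnorm : ‖y₀ - yn‖ ≤ 2 * M := by
    calc ‖y₀ - yn‖ ≤ ‖y₀‖ + ‖yn‖ := norm_sub_le _ _
      _ ≤ M + M := add_le_add (hBnorm y₀ hy₀) (hBnorm yn hynB)
      _ = 2 * M := by ring
  have habs1 : |⟪e, y₀ - yn⟫| ≤ C * (2 * M) := by
    refine (abs_real_inner_le_norm e (y₀ - yn)).trans ?_
    exact mul_le_mul (herr n) hynnorm (norm_nonneg _) hCnn
  have hle0 : ⟪x n, y₀⟫ - N (x n) ≤ 0 := by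
    have := hy₀' (x n); linarith
  -- bound t using n
  have htlt : t < δ := by
    by_contra hcon
    push_neg at hcon
    have h1 : (n : ℝ) * t ≤ C * (2 * M) := by
      have := abs_le.mp habs1
      linarith [hiden, hle0, this.1]
    have h2 : C * (2 * M) < (n : ℝ) * δ := by
      rw [div_lt_iff₀ hδpos] at hngt
      linarith
    have h3 : (n : ℝ) * δ ≤ (n : ℝ) * t := mul_le_mul_of_nonneg_left hcon hnpos.le
    linarith
  have hynclose : ‖yn - y₀‖ ≤ ε' := hδ yn hynB (by rw [← ht]; exact htlt)
  have habs2 : |⟪e, y₀ - yn⟫| ≤ C * ε' := by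
    refine (abs_real_inner_le_norm e (y₀ - yn)).trans ?_
    rw [show ‖y₀ - yn‖ = ‖yn - y₀‖ from norm_sub_rev _ _]
    exact mul_le_mul (herr n) hynclose (norm_nonneg _) hCnn
  -- the gap bound
  have hgap : N (x n) - ⟪x n, y₀⟫ ≤ C * ε' := by
    have h1 := abs_le.mp habs2
    have hnt : 0 ≤ (n : ℝ) * t := mul_nonneg hnpos.le htnn
    linarith [hiden, h1.1]
  have hCε : C * ε' < ε := by
    have h2 : (0:ℝ) < 2 * (C + 1) := by linarith
    rw [hε'def, mul_div_assoc', div_lt_iff₀ h2]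
    nlinarith
  obtain ⟨m, hm⟩ := hint (x n) (hxint n)
  rw [Real.dist_eq, sub_zero, abs_abs]
  have hround := round_le ⟪x n, y₀⟫ m
  have hamb : |⟪x n, y₀⟫ - (m : ℝ)| < ε := by
    rw [abs_sub_comm, abs_of_nonneg (by rw [← hm]; linarith [hy₀' (x n)])]
    rw [← hm]
    linarith
  linarith [hround, hamb, abs_nonneg (⟪x n, y₀⟫ - (round ⟪x n, y₀⟫ : ℝ))]
end
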